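/- arXiv:2304.04530 — 6 statements merged into one kernel-verified Lean document; each statement's English description precedes it below -/
import Mathlib

section
/- Let n ≥ 1, let D ⊆ ℝⁿ be a nonempty connected open set, and let f : D → ℝ be real-analytic on D and not identically zero on D. Then the zero set Z_f := {x ∈ D : f(x) = 0} has zero n-dimensional Lebesgue measure. -/
open MeasureTheory Set

lemma core_box : ∀ (n : ℕ) (a b : Fin n → ℝ) (f : (Fin n → ℝ) → ℝ),
    AnalyticOnNhd ℝ f (univ.pi fun i => Ioo (a i) (b i)) →
    (∃ x ∈ univ.pi fun i => Ioo (a i) (b i), f x ≠ 0) →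
    volume {x ∈ univ.pi fun i => Ioo (a i) (b i) | f x = 0} = 0 := by
  intro n
  induction n with
  | zero =>
      rintro a b f hf ⟨x, hx, hfx⟩
      have hempty : {x ∈ univ.pi fun i : Fin 0 => Ioo (a i) (b i) | f x = 0} = (∅ : Set (Fin 0 → ℝ)) := by
        ext y
        simp only [mem_setOf_eq, mem_empty_iff_false, iff_false, not_and]
        intro hy
        have : x = y := funext fun i => i.elim0
        rw [← this]; exact hfx
      rw [hempty]; exact measure_empty
  | succ n IH =>
      intro a b f hf hne
      classical
      set B : Set (Fin (n+1) → ℝ) := univ.pi fun i => Ioo (a i) (b i) with hB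
      have hBopen : IsOpen B := isOpen_set_pi finite_univ (fun i _ => isOpen_Ioo)
      set ins : ℝ → (Fin n → ℝ) → (Fin (n+1) → ℝ) := fun t y => (0 : Fin (n+1)).insertNth t y
        with hins
      set a' : Fin n → ℝ := fun j => a ((0 : Fin (n+1)).succAbove j) with ha'
      set b' : Fin n → ℝ := fun j => b ((0 : Fin (n+1)).succAbove j) with hb'
      set B' : Set (Fin n → ℝ) := univ.pi fun j => Ioo (a' j) (b' j) with hB'
      -- membership
      have hmemB : ∀ (t : ℝ) (y : Fin n → ℝ),
          ins t y ∈ B ↔ t ∈ Ioo (a 0) (b 0) ∧ y ∈ B' := by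
        intro t y
        have hc : ins t y = Fin.cons t y := Fin.insertNth_zero' t y
        simp only [hB, hB', mem_pi, mem_univ, true_implies, hc]
        rw [Fin.forall_fin_succ]
        simp [ha', hb', Fin.cons_zero, Fin.cons_succ, mem_Ioo]
      -- measurability of Z
      set Z : Set (Fin (n+1) → ℝ) := {x ∈ B | f x = 0} with hZdef
      have hcont : ContinuousOn f B := hf.continuousOn
      have hUopen : IsOpen (B ∩ f ⁻¹' ({0}ᶜ)) :=
        hcont.isOpen_inter_preimage hBopen isClosed_singleton.isOpen_compl
      have hZeq' : Z = B \ (B ∩ f ⁻¹' ({0}ᶜ)) := by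
        ext x
        simp only [hZdef, mem_setOf_eq, mem_diff, mem_inter_iff, mem_preimage, mem_compl_iff,
          mem_singleton_iff]
        tauto
      have hZmeas : MeasurableSet Z := by
        rw [hZeq']; exact hBopen.measurableSet.diff hUopen.measurableSet
      -- the linear map
      set Lψ : (ℝ × (Fin n → ℝ)) →L[ℝ] (Fin (n+1) → ℝ) :=
        ContinuousLinearMap.pi ((0 : Fin (n+1)).insertNth (ContinuousLinearMap.fst ℝ ℝ (Fin n → ℝ))
          (fun j => (ContinuousLinearMap.proj j).comp (ContinuousLinearMap.snd ℝ ℝ (Fin n → ℝ))))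
        with hLψ
      have hψ : ∀ (t : ℝ) (y : Fin n → ℝ), Lψ (t, y) = ins t y := by
        intro t y
        funext j
        refine Fin.succAboveCases 0 ?_ ?_ j
        · simp [hins, hLψ, Fin.insertNth_zero', Fin.insertNth_apply_same]
        · intro k
          simp [hins, hLψ, Fin.insertNth_zero', Fin.insertNth_apply_succAbove,
            Fin.insertNth_apply_same]
      -- sections analytic
      have hsec1 : ∀ t ∈ Ioo (a 0) (b 0),
          AnalyticOnNhd ℝ (fun y => f (ins t y)) B' := by
        intro t ht
        have heq : (fun y : Fin n → ℝ => ins t y)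
            = fun y => (Lψ.comp (ContinuousLinearMap.inr ℝ ℝ (Fin n → ℝ))) y + Lψ (t, 0) := by
          funext y
          simp only [ContinuousLinearMap.comp_apply, ContinuousLinearMap.inr_apply]
          rw [← map_add, Prod.mk_add_mk, zero_add, add_zero, hψ]
        have h1 : AnalyticOnNhd ℝ (fun y : Fin n → ℝ => ins t y) univ := by
          rw [heq]
          exact ((Lψ.comp (ContinuousLinearMap.inr ℝ ℝ (Fin n → ℝ))).analyticOnNhd univ).add
            analyticOnNhd_const
        exact hf.comp (h1.mono (subset_univ B'))
          (fun y hy => (hmemB t y).2 ⟨ht, hy⟩)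
      have hsec2 : ∀ y ∈ B',
          AnalyticOnNhd ℝ (fun t : ℝ => f (ins t y)) (Ioo (a 0) (b 0)) := by
        intro y hy
        have heq : (fun t : ℝ => ins t y)
            = fun t => (Lψ.comp (ContinuousLinearMap.inl ℝ ℝ (Fin n → ℝ))) t + Lψ (0, y) := by
          funext t
          simp only [ContinuousLinearMap.comp_apply, ContinuousLinearMap.inl_apply]
          rw [← map_add, Prod.mk_add_mk, add_zero, zero_add, hψ]
        have h1 : AnalyticOnNhd ℝ (fun t : ℝ => ins t y) univ := by
          rw [heq]
          exact ((Lψ.comp (ContinuousLinearMap.inl ℝ ℝ (Fin n → ℝ))).analyticOnNhd univ).add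
            analyticOnNhd_const
        exact hf.comp (h1.mono (subset_univ _))
          (fun t ht => (hmemB t y).2 ⟨ht, hy⟩)
      -- the exceptional set
      set T : Set ℝ := {t ∈ Ioo (a 0) (b 0) | ∀ y ∈ B', f (ins t y) = 0}
        with hT
      have hTc : T.Countable := by
        have key : ∀ q r : ℚ, Icc (q : ℝ) r ⊆ Ioo (a 0) (b 0) → (T ∩ Icc (q : ℝ) r).Finite := by
          intro q r hqr
          by_contra hfin
          rw [← Set.not_infinite, not_not] at hfin
          obtain ⟨t₀, ht₀K, hacc⟩ :=
            hfin.exists_accPt_of_subset_isCompact isCompact_Icc inter_subset_right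
          have ht₀ : t₀ ∈ Ioo (a 0) (b 0) := hqr ht₀K
          have hall : ∀ y ∈ B', ∀ t ∈ Ioo (a 0) (b 0), f (ins t y) = 0 := by
            intro y hy
            have h1 := hsec2 y hy
            have hfreq : ∃ᶠ z in nhdsWithin t₀ {t₀}ᶜ,
                (fun t : ℝ => f (ins t y)) z = 0 := by
              have h2 := (accPt_iff_frequently (x := t₀) (C := T ∩ Icc (q:ℝ) r)).mp hacc
              rw [frequently_nhdsWithin_iff]
              exact h2.mono (fun z hz => ⟨hz.2.1.2 y hy, hz.1⟩)
            exact h1.eqOn_zero_of_preconnected_of_frequently_eq_zero isPreconnected_Ioo ht₀ hfreq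
          obtain ⟨x, hxB, hfx⟩ := hne
          have hx0 : x 0 ∈ Ioo (a 0) (b 0) := by
            have := hxB 0 (mem_univ _); exact this
          have hxtail : (0 : Fin (n+1)).removeNth x ∈ B' := by
            intro j _
            exact hxB ((0 : Fin (n+1)).succAbove j) (mem_univ _)
          have := hall _ hxtail _ hx0
          simp only [hins] at this
          rw [Fin.insertNth_self_removeNth] at this
          exact hfx this
        have hsub : T ⊆ ⋃ (q : ℚ) (r : ℚ),
            (if Icc (q : ℝ) r ⊆ Ioo (a 0) (b 0) then T ∩ Icc (q : ℝ) r else ∅) := by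
          intro t ht
          have htI : t ∈ Ioo (a 0) (b 0) := ht.1
          obtain ⟨q, hq1, hq2⟩ := exists_rat_btwn htI.1
          obtain ⟨r, hr1, hr2⟩ := exists_rat_btwn htI.2
          refine mem_iUnion.mpr ⟨q, mem_iUnion.mpr ⟨r, ?_⟩⟩
          have hss : Icc (q : ℝ) r ⊆ Ioo (a 0) (b 0) :=
            fun z hz => ⟨lt_of_lt_of_le hq1 hz.1, lt_of_le_of_lt hz.2 hr2⟩
          rw [if_pos hss]
          exact ⟨ht, ⟨le_of_lt hq2, le_of_lt hr1⟩⟩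
        refine (Set.Countable.mono hsub ?_)
        refine Set.countable_iUnion fun q => Set.countable_iUnion fun r => ?_
        by_cases h : Icc (q : ℝ) r ⊆ Ioo (a 0) (b 0)
        · rw [if_pos h]; exact (key q r h).countable
        · rw [if_neg h]; exact countable_empty
      have hTnull : volume T = 0 := hTc.measure_zero _
      -- Fubini
      set e := MeasurableEquiv.piFinSuccAbove (fun _ : Fin (n+1) => ℝ) 0 with he
      have mp := volume_preserving_piFinSuccAbove (fun _ : Fin (n+1) => ℝ) 0
      set S : Set (ℝ × (Fin n → ℝ)) := e.symm ⁻¹' Z with hS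
      have hZpre : Z = e ⁻¹' S := by
        ext x; simp [hS]
      have hSmeas : MeasurableSet S := e.symm.measurable hZmeas
      have hesymm : ∀ (t : ℝ) (y : Fin n → ℝ), e.symm (t, y) = ins t y := by
        intro t y; rfl
      change volume Z = 0
      rw [hZpre, mp.measure_preimage_equiv]
      rw [MeasureTheory.Measure.volume_eq_prod, MeasureTheory.Measure.measure_prod_null hSmeas]
      have hae : ∀ᵐ t : ℝ, t ∉ T := by
        rw [← measure_eq_zero_iff_ae_notMem]; exact hTnull
      filter_upwards [hae] with t ht
      simp only [Pi.zero_apply]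
      by_cases htI : t ∈ Ioo (a 0) (b 0)
      · have hslice : Prod.mk t ⁻¹' S = {y ∈ B' | f (ins t y) = 0} := by
          ext y
          simp only [hS, mem_preimage, hesymm, hZdef, mem_setOf_eq, hmemB]
          tauto
        rw [hslice]
        have hex : ∃ y ∈ B', f (ins t y) ≠ 0 := by
          by_contra h
          push_neg at h
          exact ht ⟨htI, h⟩
        exact IH a' b' _ (hsec1 t htI) hex
      · have hslice : Prod.mk t ⁻¹' S = ∅ := by
          ext y
          simp only [hS, mem_preimage, hesymm, hZdef, mem_setOf_eq, mem_empty_iff_false,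
            iff_false, not_and]
          intro hmem
          exact absurd ((hmemB t y).1 hmem).1 htI
        rw [hslice]; exact measure_empty




/-- **Zeros of a real-analytic function have zero Lebesgue measure.**
If `D ⊆ ℝⁿ` (with `n ≥ 1`) is a nonempty connected open set and `f : ℝⁿ → ℝ` is real-analytic
on `D` and not identically zero on `D`, then the zero set `{x ∈ D : f x = 0}` has zero
`n`-dimensional Lebesgue measure. -/
theorem zero_set_of_analytic_measure_zero
    (n : ℕ) (hn : 1 ≤ n)
    (D : Set (EuclideanSpace ℝ (Fin n)))
    (hDopen : IsOpen D) (hDconn : IsConnected D)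
    (f : EuclideanSpace ℝ (Fin n) → ℝ)
    (hf : AnalyticOnNhd ℝ f D)
    (hne : ∃ x ∈ D, f x ≠ 0) :
    MeasureTheory.volume {x ∈ D | f x = 0} = 0 := by
  classical
  set L2 := PiLp.continuousLinearEquiv 2 ℝ (fun _ : Fin n => ℝ) with hL2
  set D' : Set (Fin n → ℝ) := ⇑(L2.symm) ⁻¹' D with hD'
  set g : (Fin n → ℝ) → ℝ := fun x => f (L2.symm x) with hg
  have hD'open : IsOpen D' := hDopen.preimage L2.symm.continuous
  have hD'conn : IsPreconnected D' := by
    have h1 : D' = ⇑L2 '' D := (L2.toEquiv.image_eq_preimage_symm D).symm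
    rw [h1]
    exact (hDconn.image _ L2.continuous.continuousOn).isPreconnected
  have hganal : AnalyticOnNhd ℝ g D' := by
    have := hf.comp (L2.symm.toContinuousLinearMap.analyticOnNhd D') (fun x hx => hx)
    exact this
  have hne' : ∃ x ∈ D', g x ≠ 0 := by
    obtain ⟨x, hx, hfx⟩ := hne
    refine ⟨L2 x, ?_, ?_⟩
    · show L2.symm (L2 x) ∈ D
      rw [L2.symm_apply_apply]; exact hx
    · show f (L2.symm (L2 x)) ≠ 0
      rw [L2.symm_apply_apply]; exact hfx
  have hnotlocal : ∀ x ∈ D', ¬ (∀ᶠ y in nhds x, g y = 0) := by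
    intro x hx hev
    have := hganal.eqOn_zero_of_preconnected_of_eventuallyEq_zero hD'conn hx hev
    obtain ⟨z, hz, hgz⟩ := hne'
    exact hgz (this hz)
  set Box : (Fin n → ℚ) × (Fin n → ℚ) → Set (Fin n → ℝ) :=
    fun p => univ.pi fun i => Ioo ((p.1 i : ℝ)) ((p.2 i : ℝ)) with hBox
  have hcover : {x ∈ D' | g x = 0} ⊆ ⋃ p : (Fin n → ℚ) × (Fin n → ℚ),
      (if Box p ⊆ D' then {x ∈ Box p | g x = 0} else ∅) := by
    rintro x ⟨hxD, hgx⟩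
    obtain ⟨ε, hε, hball⟩ := Metric.isOpen_iff.mp hD'open x hxD
    have hq : ∀ i, ∃ s : ℚ, x i - ε < (s : ℝ) ∧ (s : ℝ) < x i := fun i =>
      exists_rat_btwn (show x i - ε < x i by linarith)
    have hr : ∀ i, ∃ s : ℚ, x i < (s : ℝ) ∧ (s : ℝ) < x i + ε := fun i =>
      exists_rat_btwn (show x i < x i + ε by linarith)
    choose q hq1 hq2 using hq
    choose r hr1 hr2 using hr
    have hsub : Box (q, r) ⊆ D' := by
      intro y hy
      apply hball
      rw [Metric.mem_ball, dist_pi_lt_iff hε]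
      intro i
      have h1 : (q i : ℝ) < y i := (hy i (mem_univ i)).1
      have h2 : y i < (r i : ℝ) := (hy i (mem_univ i)).2
      rw [Real.dist_eq, abs_sub_lt_iff]
      constructor
      · have := hr2 i; linarith
      · have := hq1 i; linarith
    refine mem_iUnion.mpr ⟨(q, r), ?_⟩
    rw [if_pos hsub]
    refine ⟨?_, hgx⟩
    intro i _
    exact ⟨hq2 i, hr1 i⟩
  have hnull : volume {x ∈ D' | g x = 0} = 0 := by
    refine measure_mono_null hcover (measure_iUnion_null fun p => ?_)
    by_cases hsub : Box p ⊆ D'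
    · rw [if_pos hsub]
      by_cases hex : ∃ x ∈ Box p, g x ≠ 0
      · exact core_box n (fun i => (p.1 i : ℝ)) (fun i => (p.2 i : ℝ)) g
          (hganal.mono hsub) hex
      · push_neg at hex
        by_cases hne2 : (Box p).Nonempty
        · obtain ⟨x, hx⟩ := hne2
          exfalso
          apply hnotlocal x (hsub hx)
          have hBopen : IsOpen (Box p) := isOpen_set_pi finite_univ fun i _ => isOpen_Ioo
          exact Filter.eventually_of_mem (hBopen.mem_nhds hx) hex
        · have hempty : Box p = ∅ := not_nonempty_iff_eq_empty.mp hne2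
          have : {x ∈ Box p | g x = 0} = ∅ := by rw [hempty]; ext y; simp
          rw [this]; exact measure_empty
    · rw [if_neg hsub]; exact measure_empty
  set eE := (MeasurableEquiv.toLp 2 (Fin n → ℝ)).symm with heE
  have mpE := EuclideanSpace.volume_preserving_symm_measurableEquiv_toLp (Fin n)
  have hkey : ∀ x : EuclideanSpace ℝ (Fin n), L2.symm (eE x) = x := fun x => rfl
  have hset : {x ∈ D | f x = 0} = ⇑eE ⁻¹' {x ∈ D' | g x = 0} := by
    ext x
    simp only [mem_setOf_eq, mem_preimage, hD', hg, hkey x]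
  rw [hset, mpE.measure_preimage_equiv]
  exact hnull
end

section
/- Let γ = (γ₁, γ₂) : ℝ → ℝ² be real-analytic, unit-speed, positively oriented and strictly convex, let τ₀ satisfy γ₁(τ₀) > 0, γ₁'(τ₀) < 0 and γ₂'(τ₀) < 0, and set κ(τ) := √(γ₁''(τ)² + γ₂''(τ)²). Define x(τ) := γ₁(τ₀) + (γ₁'(τ₀)/γ₂'(τ₀))·(γ₂(τ) − γ₂(τ₀)), so that x'(τ) = (γ₁'(τ₀)/γ₂'(τ₀))·γ₂'(τ). Then, as τ → τ₀ from the left, γ₂'(τ)·√(γ₁(τ)² − x(τ)²) / (γ₁(τ)γ₁'(τ) − x(τ)x'(τ)) converges to |γ₂'(τ₀)|·√(|γ₂'(τ₀)| / (κ(τ₀)·γ₁(τ₀))). -/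
open Topology

/-- The curvature `κ(τ) := √(γ₁''(τ)² + γ₂''(τ)²)` of a unit-speed planar curve. -/
noncomputable def curvature (γ₁ γ₂ : ℝ → ℝ) (τ : ℝ) : ℝ :=
  Real.sqrt ((deriv (deriv γ₁) τ) ^ 2 + (deriv (deriv γ₂) τ) ^ 2)

/-- The `x`-coordinate `x(τ) := γ₁(τ₀) + (γ₁'(τ₀)/γ₂'(τ₀))(γ₂(τ) − γ₂(τ₀))` of the point of
the tangent-plane chord at height `γ₂(τ)`. -/
noncomputable def chordX (γ₁ γ₂ : ℝ → ℝ) (τ₀ τ : ℝ) : ℝ :=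
  γ₁ τ₀ + (deriv γ₁ τ₀ / deriv γ₂ τ₀) * (γ₂ τ - γ₂ τ₀)

open Filter in
lemma aux_slope_limit (f g w : ℝ → ℝ) (τ₀ a w₀ : ℝ) (ha : 0 < a)
    (hf0 : f τ₀ = 0) (hg0 : g τ₀ = 0)
    (hfd : ∀ τ, HasDerivAt f (2 * g τ) τ)
    (hga : HasDerivAt g a τ₀)
    (hw : Filter.Tendsto w (𝓝[<] τ₀) (𝓝 w₀)) :
    Filter.Tendsto (fun τ => w τ * Real.sqrt (f τ) / g τ) (𝓝[<] τ₀)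
      (𝓝 (-w₀ / Real.sqrt a)) := by
  have hmono : 𝓝[<] τ₀ ≤ 𝓝[≠] τ₀ :=
    nhdsWithin_mono _ (fun x hx => ne_of_lt hx)
  -- slope of g tends to a
  have hslope : Tendsto (fun τ => g τ / (τ - τ₀)) (𝓝[<] τ₀) (𝓝 a) := by
    have h := (hasDerivAt_iff_tendsto_slope.mp hga).mono_left hmono
    refine h.congr (fun τ => ?_)
    simp [slope_def_field, hg0]
  -- g continuous at τ₀ etc.
  have hgc : Tendsto g (𝓝[<] τ₀) (𝓝 0) := by
    have := hga.continuousAt.tendsto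
    rw [hg0] at this
    exact this.mono_left nhdsWithin_le_nhds
  have hfc : Tendsto f (𝓝[<] τ₀) (𝓝 0) := by
    have := (hfd τ₀).continuousAt.tendsto
    rw [hf0] at this
    exact this.mono_left nhdsWithin_le_nhds
  -- L'Hopital: f / (τ-τ₀)^2 → a
  have hlh : Tendsto (fun τ => f τ / (τ - τ₀) ^ 2) (𝓝[<] τ₀) (𝓝 a) := by
    apply HasDerivAt.lhopital_zero_nhdsLT
      (f' := fun τ => 2 * g τ) (g' := fun τ => 2 * (τ - τ₀))
    · exact Filter.Eventually.of_forall (fun τ => hfd τ)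
    · refine Filter.Eventually.of_forall (fun τ => ?_)
      have h1 : HasDerivAt (fun τ : ℝ => τ - τ₀) 1 τ :=
        (hasDerivAt_id τ).sub_const τ₀
      have := h1.pow 2
      simp at this
      exact this
    · filter_upwards [self_mem_nhdsWithin] with τ (hτ : τ < τ₀)
      have : τ - τ₀ ≠ 0 := sub_ne_zero.mpr (ne_of_lt hτ)
      positivity
    · exact hfc
    · refine Tendsto.mono_left ?_ nhdsWithin_le_nhds
      have : Tendsto (fun τ : ℝ => (τ - τ₀) ^ 2) (𝓝 τ₀) (𝓝 ((τ₀ - τ₀) ^ 2)) :=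
        ((continuous_id.sub continuous_const).pow 2).tendsto τ₀
      simpa using this
    · refine hslope.congr' ?_
      filter_upwards [self_mem_nhdsWithin] with τ (hτ : τ < τ₀)
      have hne : τ - τ₀ ≠ 0 := sub_ne_zero.mpr (ne_of_lt hτ)
      field_simp
  -- eventually g τ ≠ 0 and τ < τ₀
  have hgne : ∀ᶠ τ in 𝓝[<] τ₀, g τ ≠ 0 ∧ τ < τ₀ := by
    have hane : (a : ℝ) ≠ 0 := ne_of_gt ha
    have := hslope.eventually_ne hane
    filter_upwards [this, self_mem_nhdsWithin] with τ h1 (h2 : τ < τ₀)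
    refine ⟨fun hg => h1 ?_, h2⟩
    simp [hg]
  -- the key pointwise identity
  have hkey : ∀ᶠ τ in 𝓝[<] τ₀,
      w τ * Real.sqrt (f τ) / g τ
        = -(w τ * Real.sqrt (f τ / (τ - τ₀) ^ 2) / (g τ / (τ - τ₀))) := by
    filter_upwards [hgne] with τ ⟨hg, hτ⟩
    have hne : τ - τ₀ ≠ 0 := sub_ne_zero.mpr (ne_of_lt hτ)
    have hsq : Real.sqrt (f τ) = Real.sqrt (f τ / (τ - τ₀) ^ 2) * (τ₀ - τ) := by
      have h1 : f τ = f τ / (τ - τ₀) ^ 2 * (τ - τ₀) ^ 2 := by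
        field_simp
      conv_lhs => rw [h1]
      rw [Real.sqrt_mul' _ (sq_nonneg _), Real.sqrt_sq_eq_abs,
        abs_of_neg (by linarith : τ - τ₀ < 0), neg_sub]
    rw [hsq]
    generalize Real.sqrt (f τ / (τ - τ₀) ^ 2) = s
    rw [div_div_eq_mul_div]
    ring
  have hval : -(w₀ * Real.sqrt a / a) = -w₀ / Real.sqrt a := by
    have h2 : Real.sqrt a * Real.sqrt a = a := Real.mul_self_sqrt ha.le
    have hs : Real.sqrt a ≠ 0 := ne_of_gt (Real.sqrt_pos.mpr ha)
    field_simp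
    rw [Real.sq_sqrt ha.le]
  have hsqrtT : Tendsto (fun τ => Real.sqrt (f τ / (τ - τ₀) ^ 2)) (𝓝[<] τ₀)
      (𝓝 (Real.sqrt a)) := (Real.continuous_sqrt.continuousAt.tendsto).comp hlh
  have hT : Tendsto (fun τ => -(w τ * Real.sqrt (f τ / (τ - τ₀) ^ 2) / (g τ / (τ - τ₀))))
      (𝓝[<] τ₀) (𝓝 (-(w₀ * Real.sqrt a / a))) :=
    ((hw.mul hsqrtT).div hslope (ne_of_gt ha)).neg
  rw [← hval]
  exact Filter.Tendsto.congr' (Filter.EventuallyEq.symm hkey) hT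


/-- **Slope of the tangent line to the tangent-plane section.**
For a real-analytic, unit-speed, positively oriented strictly convex planar curve with
`γ₁(τ₀) > 0`, `γ₁'(τ₀) < 0`, `γ₂'(τ₀) < 0`, the quotient
`γ₂'(τ)·√(γ₁(τ)² − x(τ)²) / (γ₁(τ)γ₁'(τ) − x(τ)x'(τ))` converges, as `τ → τ₀⁻`, to
`|γ₂'(τ₀)|·√(|γ₂'(τ₀)| / (κ(τ₀)γ₁(τ₀)))`, where `x'(τ) = (γ₁'(τ₀)/γ₂'(τ₀))γ₂'(τ)`. -/
theorem slope_limit_tangent_section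
    (γ₁ γ₂ : ℝ → ℝ)
    (hγ₁ : AnalyticOnNhd ℝ γ₁ Set.univ) (hγ₂ : AnalyticOnNhd ℝ γ₂ Set.univ)
    (hunit : ∀ τ, (deriv γ₁ τ) ^ 2 + (deriv γ₂ τ) ^ 2 = 1)
    (hconv : ∀ τ, 0 < deriv γ₁ τ * deriv (deriv γ₂) τ - deriv γ₂ τ * deriv (deriv γ₁) τ)
    (τ₀ : ℝ) (hpos : 0 < γ₁ τ₀) (hγ₁' : deriv γ₁ τ₀ < 0) (hγ₂' : deriv γ₂ τ₀ < 0) :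
    Filter.Tendsto
      (fun τ => deriv γ₂ τ * Real.sqrt ((γ₁ τ) ^ 2 - (chordX γ₁ γ₂ τ₀ τ) ^ 2)
        / (γ₁ τ * deriv γ₁ τ
            - chordX γ₁ γ₂ τ₀ τ * ((deriv γ₁ τ₀ / deriv γ₂ τ₀) * deriv γ₂ τ)))
      (𝓝[<] τ₀)
      (𝓝 (|deriv γ₂ τ₀| *
        Real.sqrt (|deriv γ₂ τ₀| / (curvature γ₁ γ₂ τ₀ * γ₁ τ₀)))) := by
  have hq2 : deriv γ₂ τ₀ ≠ 0 := ne_of_lt hγ₂'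
  have hd1 : ∀ τ, HasDerivAt γ₁ (deriv γ₁ τ) τ := fun τ =>
    ((hγ₁ τ (Set.mem_univ τ)).differentiableAt).hasDerivAt
  have hd2 : ∀ τ, HasDerivAt γ₂ (deriv γ₂ τ) τ := fun τ =>
    ((hγ₂ τ (Set.mem_univ τ)).differentiableAt).hasDerivAt
  have hγ₁d := hγ₁.deriv
  have hγ₂d := hγ₂.deriv
  have hdd1 : HasDerivAt (deriv γ₁) (deriv (deriv γ₁) τ₀) τ₀ :=
    ((hγ₁d τ₀ (Set.mem_univ τ₀)).differentiableAt).hasDerivAt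
  have hdd2 : HasDerivAt (deriv γ₂) (deriv (deriv γ₂) τ₀) τ₀ :=
    ((hγ₂d τ₀ (Set.mem_univ τ₀)).differentiableAt).hasDerivAt
  set c : ℝ := deriv γ₁ τ₀ / deriv γ₂ τ₀ with hc
  set D : ℝ := deriv γ₁ τ₀ * deriv (deriv γ₂) τ₀ - deriv γ₂ τ₀ * deriv (deriv γ₁) τ₀ with hD
  have hDpos : 0 < D := hconv τ₀
  set a : ℝ := γ₁ τ₀ * D / (-(deriv γ₂ τ₀)) with haDef
  have ha : 0 < a := div_pos (mul_pos hpos hDpos) (neg_pos.mpr hγ₂')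
  have hx0 : chordX γ₁ γ₂ τ₀ τ₀ = γ₁ τ₀ := by simp [chordX]
  have hx : ∀ τ, HasDerivAt (fun τ => chordX γ₁ γ₂ τ₀ τ) (c * deriv γ₂ τ) τ := by
    intro τ
    unfold chordX
    exact (((hd2 τ).sub_const (γ₂ τ₀)).const_mul c).const_add (γ₁ τ₀)
  have hf0 : (γ₁ τ₀) ^ 2 - (chordX γ₁ γ₂ τ₀ τ₀) ^ 2 = 0 := by rw [hx0]; ring
  have hg0 : γ₁ τ₀ * deriv γ₁ τ₀ - chordX γ₁ γ₂ τ₀ τ₀ * (c * deriv γ₂ τ₀) = 0 := by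
    rw [hx0, hc]
    field_simp
    ring
  have hfd : ∀ τ, HasDerivAt
      (fun τ => (γ₁ τ) ^ 2 - (chordX γ₁ γ₂ τ₀ τ) ^ 2)
      (2 * (γ₁ τ * deriv γ₁ τ - chordX γ₁ γ₂ τ₀ τ * (c * deriv γ₂ τ))) τ := by
    intro τ
    have h := ((hd1 τ).pow 2).sub ((hx τ).pow 2)
    refine h.congr_deriv (Eq.symm ?_)
    simp
    ring
  have hga : HasDerivAt
      (fun τ => γ₁ τ * deriv γ₁ τ - chordX γ₁ γ₂ τ₀ τ * (c * deriv γ₂ τ)) a τ₀ := by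
    have h := ((hd1 τ₀).mul hdd1).sub ((hx τ₀).mul (hdd2.const_mul c))
    have hcq : c * deriv γ₂ τ₀ = deriv γ₁ τ₀ := div_mul_cancel₀ _ hq2
    refine h.congr_deriv (Eq.symm ?_)
    rw [hx0, hcq, haDef, hD, hc]
    rw [div_eq_iff (neg_ne_zero.mpr hq2)]
    field_simp
    ring
  have hw : Filter.Tendsto (deriv γ₂) (𝓝[<] τ₀) (𝓝 (deriv γ₂ τ₀)) :=
    ((hγ₂d τ₀ (Set.mem_univ τ₀)).continuousAt.tendsto).mono_left nhdsWithin_le_nhds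
  have main := aux_slope_limit
    (fun τ => (γ₁ τ) ^ 2 - (chordX γ₁ γ₂ τ₀ τ) ^ 2)
    (fun τ => γ₁ τ * deriv γ₁ τ - chordX γ₁ γ₂ τ₀ τ * (c * deriv γ₂ τ))
    (deriv γ₂) τ₀ a (deriv γ₂ τ₀) ha hf0 hg0 hfd hga hw
  -- orthogonality and curvature
  have horth : deriv γ₁ τ₀ * deriv (deriv γ₁) τ₀ + deriv γ₂ τ₀ * deriv (deriv γ₂) τ₀ = 0 := by
    have h1 := (hdd1.pow 2).add (hdd2.pow 2)
    have h2 : (deriv γ₁ ^ 2 + deriv γ₂ ^ 2) = fun _ => (1 : ℝ) :=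
      funext hunit
    rw [h2] at h1
    have h3 := h1.unique (hasDerivAt_const τ₀ 1)
    simp at h3
    linarith
  have hκ : curvature γ₁ γ₂ τ₀ = D := by
    unfold curvature
    have h := hunit τ₀
    have h2 : (deriv (deriv γ₁) τ₀) ^ 2 + (deriv (deriv γ₂) τ₀) ^ 2 = D ^ 2 := by
      rw [hD]; nlinarith [horth, h]
    rw [h2, Real.sqrt_sq hDpos.le]
  have hfinal : |deriv γ₂ τ₀| *
      Real.sqrt (|deriv γ₂ τ₀| / (curvature γ₁ γ₂ τ₀ * γ₁ τ₀))
      = -(deriv γ₂ τ₀) / Real.sqrt a := by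
    rw [hκ, abs_of_neg hγ₂']
    have h1 : -deriv γ₂ τ₀ / (D * γ₁ τ₀) = a⁻¹ := by
      rw [haDef]
      field_simp
    rw [h1, Real.sqrt_inv, div_eq_mul_inv]
  rw [hfinal]
  exact main
end

section
/- Let γ = (γ₁, γ₂) : ℝ → ℝ² be real-analytic, unit-speed, positively oriented and strictly convex, let τ₀ satisfy γ₂'(τ₀) < 0, and set κ(τ) := √(γ₁''(τ)² + γ₂''(τ)²). Define x(τ) := γ₁(τ₀) + (γ₁'(τ₀)/γ₂'(τ₀))·(γ₂(τ) − γ₂(τ₀)). Then, as τ → τ₀, one has the second-order Taylor expansion (γ₁(τ) − x(τ)) − (κ(τ₀)/(2|γ₂'(τ₀)|))·(τ − τ₀)² = O(|τ − τ₀|³); i.e., the left-hand side is big-O of |τ − τ₀|³ along the filter 𝓝 τ₀. -/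
open Topology Asymptotics

set_option maxRecDepth 8000

private lemma isBigO_cube_of_deriv2_zero (f : ℝ → ℝ) (x₀ : ℝ) (hf : AnalyticAt ℝ f x₀)
    (h0 : f x₀ = 0) (h1 : deriv f x₀ = 0) (h2 : deriv (deriv f) x₀ = 0) :
    f =O[𝓝 x₀] fun t => |t - x₀| ^ 3 := by
  obtain ⟨p, r, hp⟩ := hf
  have hcoef : ∀ k, k < 3 → ∀ y : ℝ, p k (fun _ => y) = 0 := by
    intro k hk y
    have h := hp.factorial_smul y k
    have hd : iteratedFDeriv ℝ k f x₀ (fun _ => y) = y ^ k • iteratedDeriv k f x₀ := by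
      have hy : (fun _ : Fin k => y) = fun _ : Fin k => y • (1 : ℝ) := by
        funext _; simp
      rw [hy, (iteratedFDeriv ℝ k f x₀).map_smul_univ]
      simp [iteratedDeriv_eq_iteratedFDeriv]
    have hz : iteratedDeriv k f x₀ = 0 := by
      interval_cases k
      · simpa [iteratedDeriv_zero] using h0
      · simpa [iteratedDeriv_one] using h1
      · rw [show (2:ℕ) = 1 + 1 from rfl, iteratedDeriv_succ, iteratedDeriv_one]
        exact h2
    rw [hd, hz, smul_zero] at h
    have hk' : (k.factorial : ℝ) ≠ 0 := by exact_mod_cast Nat.factorial_ne_zero k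
    have := h
    rw [nsmul_eq_mul] at this
    exact (mul_eq_zero.mp this).resolve_left hk'
  have hcoeff : ∀ k, k < 3 → p.coeff k = 0 := by
    intro k hk
    have := hcoef k hk 1
    rw [FormalMultilinearSeries.apply_eq_pow_smul_coeff, one_pow, one_smul] at this
    exact this
  have e0 : p.coeff 0 = 0 := hcoeff 0 (by norm_num)
  have e1 : p.coeff 1 = 0 := hcoeff 1 (by norm_num)
  have e2 : p.coeff 2 = 0 := hcoeff 2 (by norm_num)
  have hps : ∀ y : ℝ, p.partialSum 3 y = 0 := by
    intro y
    rw [FormalMultilinearSeries.partialSum, Finset.sum_range_succ, Finset.sum_range_succ,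
      Finset.sum_range_one, hcoef 0 (by norm_num) y, hcoef 1 (by norm_num) y,
      hcoef 2 (by norm_num) y]
    ring
  have hO := hp.hasFPowerSeriesAt.isBigO_sub_partialSum_pow 3
  have hO' : (fun y : ℝ => f (x₀ + y)) =O[𝓝 (0:ℝ)] fun y : ℝ => ‖y‖ ^ 3 := by
    simpa [hps] using hO
  have htend : Filter.Tendsto (fun t : ℝ => t - x₀) (𝓝 x₀) (𝓝 0) := by
    have h := (continuous_id.sub (continuous_const (y := x₀))).tendsto x₀
    rw [show (0:ℝ) = x₀ - x₀ by ring]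
    exact h
  have hcomp := hO'.comp_tendsto htend
  exact hcomp.congr (fun t => by simp [Function.comp])
    (fun t => by simp [Function.comp, Real.norm_eq_abs])

/-- **Second-order Taylor expansion of the gap `γ₁ − x`.**
For a real-analytic, unit-speed, positively oriented strictly convex planar curve with
`γ₂'(τ₀) < 0`, one has
`(γ₁(τ) − x(τ)) − (κ(τ₀)/(2|γ₂'(τ₀)|))(τ − τ₀)² = O(|τ − τ₀|³)` as `τ → τ₀`. -/
theorem gap_expansion_isBigO
    (γ₁ γ₂ : ℝ → ℝ)
    (hγ₁ : AnalyticOnNhd ℝ γ₁ Set.univ) (hγ₂ : AnalyticOnNhd ℝ γ₂ Set.univ)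
    (hunit : ∀ τ, (deriv γ₁ τ) ^ 2 + (deriv γ₂ τ) ^ 2 = 1)
    (hconv : ∀ τ, 0 < deriv γ₁ τ * deriv (deriv γ₂) τ - deriv γ₂ τ * deriv (deriv γ₁) τ)
    (τ₀ : ℝ) (hγ₂' : deriv γ₂ τ₀ < 0) :
    (fun τ => (γ₁ τ - chordX γ₁ γ₂ τ₀ τ)
        - (curvature γ₁ γ₂ τ₀ / (2 * |deriv γ₂ τ₀|)) * (τ - τ₀) ^ 2)
      =O[𝓝 τ₀] (fun τ => |τ - τ₀| ^ 3) := by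
  set A := deriv γ₁ τ₀ with hA
  set B := deriv γ₂ τ₀ with hB
  set A' := deriv (deriv γ₁) τ₀ with hA'
  set B' := deriv (deriv γ₂) τ₀ with hB'
  have hBne : B ≠ 0 := ne_of_lt hγ₂'
  set a := A / B with ha
  set c := curvature γ₁ γ₂ τ₀ / (2 * |B|) with hc
  -- differentiability facts
  have hd1 : ∀ τ, DifferentiableAt ℝ γ₁ τ := fun τ =>
    (hγ₁ τ (Set.mem_univ τ)).differentiableAt
  have hd2 : ∀ τ, DifferentiableAt ℝ γ₂ τ := fun τ =>
    (hγ₂ τ (Set.mem_univ τ)).differentiableAt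
  have hdd1 : ∀ τ, DifferentiableAt ℝ (deriv γ₁) τ := fun τ =>
    ((hγ₁.deriv) τ (Set.mem_univ τ)).differentiableAt
  have hdd2 : ∀ τ, DifferentiableAt ℝ (deriv γ₂) τ := fun τ =>
    ((hγ₂.deriv) τ (Set.mem_univ τ)).differentiableAt
  -- orthogonality: A A' + B B' = 0
  have horth : A * A' + B * B' = 0 := by
    have h1 : HasDerivAt (fun τ => (deriv γ₁ τ) ^ 2 + (deriv γ₂ τ) ^ 2)
        (2 * A * A' + 2 * B * B') τ₀ := by
      have hderiv1 : HasDerivAt (deriv γ₁) A' τ₀ := (hdd1 τ₀).hasDerivAt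
      have hderiv2 : HasDerivAt (deriv γ₂) B' τ₀ := (hdd2 τ₀).hasDerivAt
      have := (hderiv1.pow 2).add (hderiv2.pow 2)
      refine this.congr_deriv ?_
      push_cast
      ring
    have heq : (fun τ => (deriv γ₁ τ) ^ 2 + (deriv γ₂ τ) ^ 2) = fun _ : ℝ => (1:ℝ) :=
      funext hunit
    rw [heq] at h1
    have h2 : HasDerivAt (fun _ : ℝ => (1:ℝ)) 0 τ₀ := hasDerivAt_const _ _
    have := h1.unique h2
    linarith
  -- the determinant
  set D := A * B' - B * A' with hD
  have hDpos : 0 < D := hconv τ₀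
  -- curvature equals D
  have hkappa : curvature γ₁ γ₂ τ₀ = D := by
    have hsq : A' ^ 2 + B' ^ 2 = D ^ 2 := by
      have hu : A ^ 2 + B ^ 2 = 1 := hunit τ₀
      nlinarith [horth, hu]
    rw [curvature, ← hA', ← hB', hsq]
    exact Real.sqrt_sq hDpos.le
  -- value of c
  have habsB : |B| = -B := abs_of_neg hγ₂'
  have hcval : 2 * c = -D / B := by
    rw [hc, hkappa, habsB]
    field_simp
  -- the gap function
  set F : ℝ → ℝ := fun τ => (γ₁ τ - chordX γ₁ γ₂ τ₀ τ) - c * (τ - τ₀) ^ 2 with hF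
  have hFanalytic : AnalyticAt ℝ F τ₀ := by
    apply AnalyticAt.sub
    · apply AnalyticAt.sub (hγ₁ τ₀ (Set.mem_univ τ₀))
      unfold chordX
      exact analyticAt_const.add (analyticAt_const.mul
        ((hγ₂ τ₀ (Set.mem_univ τ₀)).sub analyticAt_const))
    · exact analyticAt_const.mul (((analyticAt_id).sub analyticAt_const).pow 2)
  -- first derivative of F, as a function
  have hFderiv : deriv F = fun τ => deriv γ₁ τ - a * deriv γ₂ τ - c * (2 * (τ - τ₀)) := by
    funext τ
    have h : HasDerivAt F (deriv γ₁ τ - a * deriv γ₂ τ - c * (2 * (τ - τ₀))) τ := by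
      have h1 : HasDerivAt γ₁ (deriv γ₁ τ) τ := (hd1 τ).hasDerivAt
      have h2 : HasDerivAt γ₂ (deriv γ₂ τ) τ := (hd2 τ).hasDerivAt
      have h3 : HasDerivAt (fun τ => chordX γ₁ γ₂ τ₀ τ) (a * deriv γ₂ τ) τ := by
        unfold chordX
        have := ((hasDerivAt_const τ (γ₁ τ₀)).add
          ((hasDerivAt_const τ a).mul (h2.sub_const (γ₂ τ₀))))
        refine this.congr_deriv ?_
        ring
      have h4 : HasDerivAt (fun τ : ℝ => c * (τ - τ₀) ^ 2) (c * (2 * (τ - τ₀))) τ := by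
        have := (hasDerivAt_const τ c).mul (((hasDerivAt_id τ).sub_const τ₀).pow 2)
        refine this.congr_deriv ?_
        simp only [id_eq]
        push_cast
        ring
      exact (h1.sub h3).sub h4
    exact h.deriv
  have hF0 : F τ₀ = 0 := by simp [hF, chordX]
  have hF1 : deriv F τ₀ = 0 := by
    rw [hFderiv]
    simp only [sub_self, mul_zero, sub_zero]
    rw [ha, ← hA, ← hB, div_mul_cancel₀ _ hBne]
    ring
  have hF2 : deriv (deriv F) τ₀ = 0 := by
    rw [hFderiv]
    have h : HasDerivAt (fun τ => deriv γ₁ τ - a * deriv γ₂ τ - c * (2 * (τ - τ₀)))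
        (A' - a * B' - 2 * c) τ₀ := by
      have h1 : HasDerivAt (deriv γ₁) A' τ₀ := (hdd1 τ₀).hasDerivAt
      have h2 : HasDerivAt (deriv γ₂) B' τ₀ := (hdd2 τ₀).hasDerivAt
      have h3 : HasDerivAt (fun τ : ℝ => c * (2 * (τ - τ₀))) (2 * c) τ₀ := by
        have := (hasDerivAt_const τ₀ c).mul
          ((hasDerivAt_const τ₀ (2:ℝ)).mul ((hasDerivAt_id τ₀).sub_const τ₀))
        refine this.congr_deriv ?_
        ring
      have := (h1.sub ((hasDerivAt_const τ₀ a).mul h2)).sub h3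
      refine this.congr_deriv ?_
      ring
    rw [h.deriv, ha, hcval]
    field_simp
    linarith [horth, hDpos, hunit τ₀]
  have := isBigO_cube_of_deriv2_zero F τ₀ hFanalytic hF0 hF1 hF2
  exact this
end

section
/- Let γ = (γ₁, γ₂) : ℝ → ℝ² be real-analytic, unit-speed, positively oriented and strictly convex, let τ₀ satisfy γ₁(τ₀) > 0, γ₁'(τ₀) < 0 and γ₂'(τ₀) < 0, and set κ(τ) := √(γ₁''(τ)² + γ₂''(τ)²). Define x(τ) := γ₁(τ₀) + (γ₁'(τ₀)/γ₂'(τ₀))·(γ₂(τ) − γ₂(τ₀)) and y(τ) := √(γ₁(τ)² − x(τ)²). Then there exists δ > 0 such that γ₁(τ)² − x(τ)² > 0 for all τ ∈ (τ₀ − δ, τ₀), y is twice differentiable on (τ₀ − δ, τ₀), and as τ → τ₀ from the left, y''(τ) converges to −(γ₁(τ₀)κ'(τ₀)/3 + κ(τ₀)γ₁'(τ₀)) / √(κ(τ₀)·γ₁(τ₀)·|γ₂'(τ₀)|). -/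
open Topology
open Set Filter

/-- The height function `y(τ) := √(γ₁(τ)² − x(τ)²)` of the tangent-plane section. -/
noncomputable def sectionY (γ₁ γ₂ : ℝ → ℝ) (τ₀ τ : ℝ) : ℝ :=
  Real.sqrt ((γ₁ τ) ^ 2 - (chordX γ₁ γ₂ τ₀ τ) ^ 2)

private lemma sqrt_factor_limit (f : ℝ → ℝ) (τ₀ A B : ℝ) (hA : 0 < A)
    (hf : AnalyticAt ℝ f τ₀)
    (h0 : f τ₀ = 0) (h1 : deriv f τ₀ = 0)
    (h2 : deriv (deriv f) τ₀ = 2 * A)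
    (h3 : deriv (deriv (deriv f)) τ₀ = 6 * B) :
    ∃ δ > 0,
      (∀ τ ∈ Set.Ioo (τ₀ - δ) τ₀, 0 < f τ) ∧
      (∀ τ ∈ Set.Ioo (τ₀ - δ) τ₀,
        DifferentiableAt ℝ (fun t => Real.sqrt (f t)) τ ∧
        DifferentiableAt ℝ (deriv (fun t => Real.sqrt (f t))) τ) ∧
      Filter.Tendsto (deriv (deriv (fun t => Real.sqrt (f t)))) (𝓝[<] τ₀)
        (𝓝 (-B / Real.sqrt A)) := by
  classical
  set g : ℝ → ℝ := dslope (dslope f τ₀) τ₀ with hgdef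
  have hg : AnalyticAt ℝ g τ₀ := by
    obtain ⟨p, hp⟩ := hf
    exact ⟨_, hp.has_fpower_series_dslope_fslope.has_fpower_series_dslope_fslope⟩
  have hfg : ∀ τ, f τ = (τ - τ₀) ^ 2 * g τ := by
    intro τ
    have e1 : (τ - τ₀) • dslope f τ₀ τ = f τ - f τ₀ := sub_smul_dslope f τ₀ τ
    have e0 : dslope f τ₀ τ₀ = 0 := by rw [dslope_same]; exact h1
    have e2 : (τ - τ₀) • g τ = dslope f τ₀ τ - dslope f τ₀ τ₀ := sub_smul_dslope _ τ₀ τ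
    rw [e0, sub_zero] at e2
    rw [h0, sub_zero] at e1
    rw [← e1, ← e2, smul_eq_mul, smul_eq_mul]; ring
  -- open set where g is analytic
  set U : Set ℝ := {x | AnalyticAt ℝ g x} with hUdef
  have hUopen : IsOpen U := isOpen_analyticAt ℝ g
  have hτ₀U : τ₀ ∈ U := hg
  have hgU : AnalyticOnNhd ℝ g U := fun x hx => hx
  have hg1U : AnalyticOnNhd ℝ (deriv g) U := hgU.deriv
  have hg2U : AnalyticOnNhd ℝ (deriv (deriv g)) U := hg1U.deriv
  have hdg : ∀ x ∈ U, HasDerivAt g (deriv g x) x := fun x hx =>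
    (hgU x hx).differentiableAt.hasDerivAt
  have hdg1 : ∀ x ∈ U, HasDerivAt (deriv g) (deriv (deriv g) x) x := fun x hx =>
    (hg1U x hx).differentiableAt.hasDerivAt
  have hdg2 : ∀ x ∈ U, HasDerivAt (deriv (deriv g)) (deriv (deriv (deriv g)) x) x :=
    fun x hx => (hg2U x hx).differentiableAt.hasDerivAt
  have hsq : ∀ x : ℝ, HasDerivAt (fun τ => (τ - τ₀) ^ 2) (2 * (x - τ₀)) x := by
    intro x
    have := (((hasDerivAt_id x).sub_const τ₀).pow 2)
    refine this.congr_deriv ?_; simp only [id_eq]; ring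
  -- first derivative of f on U
  set ψ1 : ℝ → ℝ := fun τ => 2 * (τ - τ₀) * g τ + (τ - τ₀) ^ 2 * deriv g τ with hψ1def
  have hψ1 : ∀ x ∈ U, HasDerivAt f (ψ1 x) x := by
    intro x hx
    have hprod := (hsq x).mul (hdg x hx)
    have hfe : f = fun τ => (τ - τ₀) ^ 2 * g τ := funext hfg
    rw [hfe]
    exact hprod
  have hdf : Set.EqOn (deriv f) ψ1 U := fun x hx => (hψ1 x hx).deriv
  -- second derivative of f on U
  set ψ2 : ℝ → ℝ := fun τ => 2 * g τ + 4 * (τ - τ₀) * deriv g τ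
      + (τ - τ₀) ^ 2 * deriv (deriv g) τ with hψ2def
  have hψ2 : ∀ x ∈ U, HasDerivAt ψ1 (ψ2 x) x := by
    intro x hx
    have ha : HasDerivAt (fun τ : ℝ => 2 * (τ - τ₀)) 2 x := by
      have := ((hasDerivAt_id x).sub_const τ₀).const_mul 2
      refine this.congr_deriv ?_; ring
    have h₁ := ha.mul (hdg x hx)
    have h₂ := (hsq x).mul (hdg1 x hx)
    have := h₁.add h₂
    refine this.congr_deriv ?_; simp only [hψ2def]; ring
  have hdf2 : Set.EqOn (deriv (deriv f)) ψ2 U := by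
    intro x hx
    have hev : deriv f =ᶠ[𝓝 x] ψ1 :=
      Filter.eventuallyEq_of_mem (hUopen.mem_nhds hx) hdf
    exact ((hψ2 x hx).congr_of_eventuallyEq hev).deriv
  have hgτ₀ : g τ₀ = A := by
    have := hdf2 hτ₀U
    rw [h2] at this
    simp [hψ2def] at this
    linarith
  -- third derivative of f at τ₀
  set ψ3 : ℝ → ℝ := fun τ => 6 * deriv g τ + 6 * (τ - τ₀) * deriv (deriv g) τ
      + (τ - τ₀) ^ 2 * deriv (deriv (deriv g)) τ with hψ3def
  have hψ3 : ∀ x ∈ U, HasDerivAt ψ2 (ψ3 x) x := by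
    intro x hx
    have ha : HasDerivAt (fun τ : ℝ => 4 * (τ - τ₀)) 4 x := by
      have := ((hasDerivAt_id x).sub_const τ₀).const_mul 4
      refine this.congr_deriv ?_; ring
    have h₀ := (hdg x hx).const_mul 2
    have h₁ := ha.mul (hdg1 x hx)
    have h₂ := (hsq x).mul (hdg2 x hx)
    have := (h₀.add h₁).add h₂
    refine this.congr_deriv ?_; simp only [hψ3def]; ring
  have hdgτ₀ : deriv g τ₀ = B := by
    have hev : deriv (deriv f) =ᶠ[𝓝 τ₀] ψ2 :=
      Filter.eventuallyEq_of_mem (hUopen.mem_nhds hτ₀U) hdf2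
    have := ((hψ3 τ₀ hτ₀U).congr_of_eventuallyEq hev).deriv
    rw [h3] at this
    simp [hψ3def] at this
    linarith
  -- choose δ so that (τ₀ - δ, τ₀ + δ) ⊆ U and g > 0 there
  have hgc : ContinuousAt g τ₀ := hg.continuousAt
  have hgτ₀pos : 0 < g τ₀ := by rw [hgτ₀]; exact hA
  have hVmem : U ∩ g ⁻¹' (Set.Ioi 0) ∈ 𝓝 τ₀ :=
    Filter.inter_mem (hUopen.mem_nhds hτ₀U)
      (hgc.preimage_mem_nhds (Ioi_mem_nhds hgτ₀pos))
  obtain ⟨δ, hδpos, hball⟩ := Metric.mem_nhds_iff.mp hVmem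
  have hballU : ∀ τ ∈ Metric.ball τ₀ δ, τ ∈ U := fun τ hτ => (hball hτ).1
  have hballg : ∀ τ ∈ Metric.ball τ₀ δ, 0 < g τ := fun τ hτ => (hball hτ).2
  have hτ₀ball : τ₀ ∈ Metric.ball τ₀ δ := Metric.mem_ball_self hδpos
  have hIball : Set.Ioo (τ₀ - δ) τ₀ ⊆ Metric.ball τ₀ δ := by
    rw [Real.ball_eq_Ioo]
    exact Set.Ioo_subset_Ioo le_rfl (by linarith)
  have hsqrtg : ∀ τ ∈ Metric.ball τ₀ δ, 0 < Real.sqrt (g τ) := fun τ hτ =>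
    Real.sqrt_pos.mpr (hballg τ hτ)
  -- the auxiliary functions
  set w : ℝ → ℝ := fun τ => deriv g τ / (2 * Real.sqrt (g τ)) with hwdef
  set w2 : ℝ → ℝ := fun τ =>
      (deriv (deriv g) τ * (2 * Real.sqrt (g τ)) - deriv g τ * (2 * w τ))
        / (2 * Real.sqrt (g τ)) ^ 2 with hw2def
  set h : ℝ → ℝ := fun τ => (τ₀ - τ) * Real.sqrt (g τ) with hhdef
  set h1 : ℝ → ℝ := fun τ => -Real.sqrt (g τ) + (τ₀ - τ) * w τ with hh1def
  set h2 : ℝ → ℝ := fun τ => -(2 * w τ) + (τ₀ - τ) * w2 τ with hh2def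
  have hu : ∀ τ ∈ Metric.ball τ₀ δ,
      HasDerivAt (fun t => Real.sqrt (g t)) (w τ) τ := fun τ hτ =>
    (hdg τ (hballU τ hτ)).sqrt (ne_of_gt (hballg τ hτ))
  have hlin : ∀ τ : ℝ, HasDerivAt (fun t : ℝ => τ₀ - t) (-1) τ := fun τ => by
    simpa using (hasDerivAt_id τ).const_sub τ₀
  have hh : ∀ τ ∈ Metric.ball τ₀ δ, HasDerivAt h (h1 τ) τ := by
    intro τ hτ
    have := (hlin τ).mul (hu τ hτ)
    refine this.congr_deriv ?_; simp only [hh1def]; ring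
  have hw : ∀ τ ∈ Metric.ball τ₀ δ, HasDerivAt w (w2 τ) τ := by
    intro τ hτ
    have hden : HasDerivAt (fun t => 2 * Real.sqrt (g t)) (2 * w τ) τ :=
      (hu τ hτ).const_mul 2
    exact (hdg1 τ (hballU τ hτ)).div hden (ne_of_gt (by have := hsqrtg τ hτ; linarith))
  have hh1 : ∀ τ ∈ Metric.ball τ₀ δ, HasDerivAt h1 (h2 τ) τ := by
    intro τ hτ
    have := ((hu τ hτ).neg).add ((hlin τ).mul (hw τ hτ))
    refine this.congr_deriv ?_; simp only [hh2def]; ring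
  -- equality of √f with h on the left interval
  have heq : Set.EqOn (fun t => Real.sqrt (f t)) h (Set.Ioo (τ₀ - δ) τ₀) := by
    intro τ hτ
    have h1' : Real.sqrt (f τ) = Real.sqrt ((τ - τ₀) ^ 2) * Real.sqrt (g τ) := by
      rw [hfg τ, Real.sqrt_mul (sq_nonneg _)]
    have h2' : Real.sqrt ((τ - τ₀) ^ 2) = τ₀ - τ := by
      rw [Real.sqrt_sq_eq_abs, abs_of_neg (by linarith [hτ.2] : τ - τ₀ < 0)]; ring
    simp only [hhdef]
    rw [h1', h2']
  have hD1 : ∀ τ ∈ Set.Ioo (τ₀ - δ) τ₀,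
      HasDerivAt (fun t => Real.sqrt (f t)) (h1 τ) τ := by
    intro τ hτ
    exact (hh τ (hIball hτ)).congr_of_eventuallyEq
      (Filter.eventuallyEq_of_mem (isOpen_Ioo.mem_nhds hτ) heq)
  have hE1 : Set.EqOn (deriv fun t => Real.sqrt (f t)) h1 (Set.Ioo (τ₀ - δ) τ₀) :=
    fun τ hτ => (hD1 τ hτ).deriv
  have hD2 : ∀ τ ∈ Set.Ioo (τ₀ - δ) τ₀,
      HasDerivAt (deriv fun t => Real.sqrt (f t)) (h2 τ) τ := by
    intro τ hτ
    exact (hh1 τ (hIball hτ)).congr_of_eventuallyEq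
      (Filter.eventuallyEq_of_mem (isOpen_Ioo.mem_nhds hτ) hE1)
  have hE2 : Set.EqOn (deriv (deriv fun t => Real.sqrt (f t))) h2
      (Set.Ioo (τ₀ - δ) τ₀) := fun τ hτ => (hD2 τ hτ).deriv
  refine ⟨δ, hδpos, ?_, ?_, ?_⟩
  · intro τ hτ
    rw [hfg τ]
    exact mul_pos (pow_two_pos_of_ne_zero (sub_ne_zero.mpr (ne_of_lt hτ.2)))
      (hballg τ (hIball hτ))
  · intro τ hτ
    exact ⟨(hD1 τ hτ).differentiableAt, (hD2 τ hτ).differentiableAt⟩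
  · have hdgc : ContinuousAt (deriv g) τ₀ := (hg1U τ₀ hτ₀U).continuousAt
    have hdg2c : ContinuousAt (deriv (deriv g)) τ₀ := (hg2U τ₀ hτ₀U).continuousAt
    have hsqc : ContinuousAt (fun t => Real.sqrt (g t)) τ₀ :=
      Real.continuous_sqrt.continuousAt.comp hgc
    have hsqpos : 0 < Real.sqrt (g τ₀) := Real.sqrt_pos.mpr hgτ₀pos
    have hden_ne : (2 : ℝ) * Real.sqrt (g τ₀) ≠ 0 := by positivity
    have hwc : ContinuousAt w τ₀ :=
      hdgc.div (continuousAt_const.mul hsqc) hden_ne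
    have hw2c : ContinuousAt w2 τ₀ := by
      refine ContinuousAt.div ?_ ((continuousAt_const.mul hsqc).pow 2)
        (pow_ne_zero _ hden_ne)
      exact (hdg2c.mul (continuousAt_const.mul hsqc)).sub
        (hdgc.mul (continuousAt_const.mul hwc))
    have hh2c : ContinuousAt h2 τ₀ := by
      exact ((hwc.const_mul 2).neg).add
        ((continuousAt_const.sub continuousAt_id).mul hw2c)
    have hval : h2 τ₀ = -B / Real.sqrt A := by
      have hsA : Real.sqrt (g τ₀) = Real.sqrt A := by rw [hgτ₀]
      simp only [hh2def, hwdef, sub_self, zero_mul, add_zero, hdgτ₀, hsA]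
      have : Real.sqrt A ≠ 0 := by rw [← hsA]; exact ne_of_gt hsqpos
      field_simp
    have htend : Filter.Tendsto h2 (𝓝[<] τ₀) (𝓝 (-B / Real.sqrt A)) := by
      rw [← hval]
      exact hh2c.tendsto.mono_left nhdsWithin_le_nhds
    refine htend.congr' ?_
    have hImem : Set.Ioo (τ₀ - δ) τ₀ ∈ 𝓝[<] τ₀ :=
      Ioo_mem_nhdsLT_of_mem ⟨by linarith, le_rfl⟩
    filter_upwards [hImem] with τ hτ
    exact (hE2 hτ).symm

/-- **Left-limit of `y''` at `τ₀`.**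
For a real-analytic, unit-speed, positively oriented strictly convex planar curve with
`γ₁(τ₀) > 0`, `γ₁'(τ₀) < 0`, `γ₂'(τ₀) < 0`, there exists `δ > 0` such that
`γ₁(τ)² − x(τ)² > 0` on `(τ₀ − δ, τ₀)`, `y` is twice differentiable on `(τ₀ − δ, τ₀)`,
and `y''(τ) → −(γ₁(τ₀)κ'(τ₀)/3 + κ(τ₀)γ₁'(τ₀)) / √(κ(τ₀)γ₁(τ₀)|γ₂'(τ₀)|)` as `τ → τ₀⁻`. -/
theorem second_derivative_limit_sectionY
    (γ₁ γ₂ : ℝ → ℝ)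
    (hγ₁ : AnalyticOnNhd ℝ γ₁ Set.univ) (hγ₂ : AnalyticOnNhd ℝ γ₂ Set.univ)
    (hunit : ∀ τ, (deriv γ₁ τ) ^ 2 + (deriv γ₂ τ) ^ 2 = 1)
    (hconv : ∀ τ, 0 < deriv γ₁ τ * deriv (deriv γ₂) τ - deriv γ₂ τ * deriv (deriv γ₁) τ)
    (τ₀ : ℝ) (hpos : 0 < γ₁ τ₀) (hγ₁' : deriv γ₁ τ₀ < 0) (hγ₂' : deriv γ₂ τ₀ < 0) :
    ∃ δ > 0,
      (∀ τ ∈ Set.Ioo (τ₀ - δ) τ₀, 0 < (γ₁ τ) ^ 2 - (chordX γ₁ γ₂ τ₀ τ) ^ 2) ∧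
      (∀ τ ∈ Set.Ioo (τ₀ - δ) τ₀,
        DifferentiableAt ℝ (sectionY γ₁ γ₂ τ₀) τ ∧
        DifferentiableAt ℝ (deriv (sectionY γ₁ γ₂ τ₀)) τ) ∧
      Filter.Tendsto (deriv (deriv (sectionY γ₁ γ₂ τ₀))) (𝓝[<] τ₀)
        (𝓝 (-(γ₁ τ₀ * deriv (curvature γ₁ γ₂) τ₀ / 3
              + curvature γ₁ γ₂ τ₀ * deriv γ₁ τ₀)
            / Real.sqrt (curvature γ₁ γ₂ τ₀ * γ₁ τ₀ * |deriv γ₂ τ₀|))) := by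
  have hγ₁d : AnalyticOnNhd ℝ (deriv γ₁) Set.univ := hγ₁.deriv
  have hγ₂d : AnalyticOnNhd ℝ (deriv γ₂) Set.univ := hγ₂.deriv
  have hγ₁dd : AnalyticOnNhd ℝ (deriv (deriv γ₁)) Set.univ := hγ₁d.deriv
  have hγ₂dd : AnalyticOnNhd ℝ (deriv (deriv γ₂)) Set.univ := hγ₂d.deriv
  have hD : ∀ (F : ℝ → ℝ), AnalyticOnNhd ℝ F Set.univ →
      ∀ τ : ℝ, HasDerivAt F (deriv F τ) τ := fun F hF τ =>
    (hF τ trivial).differentiableAt.hasDerivAt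
  -- orthogonality from unit speed
  have orth : ∀ τ, deriv γ₁ τ * deriv (deriv γ₁) τ
      + deriv γ₂ τ * deriv (deriv γ₂) τ = 0 := by
    intro τ
    have hS : HasDerivAt (fun t => deriv γ₁ t ^ 2 + deriv γ₂ t ^ 2)
        (2 * (deriv γ₁ τ * deriv (deriv γ₁) τ) + 2 * (deriv γ₂ τ * deriv (deriv γ₂) τ)) τ := by
      have h1 := (hD _ hγ₁d τ).pow 2
      have h2 := (hD _ hγ₂d τ).pow 2
      have := h1.add h2
      refine this.congr_deriv ?_; ring
    have hconst : (fun t => deriv γ₁ t ^ 2 + deriv γ₂ t ^ 2) = fun _ : ℝ => (1 : ℝ) :=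
      funext hunit
    rw [hconst] at hS
    have := hS.unique (hasDerivAt_const τ 1)
    linarith
  -- curvature equals the Wronskian
  have hW : ∀ τ, curvature γ₁ γ₂ τ
      = deriv γ₁ τ * deriv (deriv γ₂) τ - deriv γ₂ τ * deriv (deriv γ₁) τ := by
    intro τ
    have hsq : deriv (deriv γ₁) τ ^ 2 + deriv (deriv γ₂) τ ^ 2
        = (deriv γ₁ τ * deriv (deriv γ₂) τ - deriv γ₂ τ * deriv (deriv γ₁) τ) ^ 2 := by
      linear_combination (-(deriv (deriv γ₁) τ ^ 2 + deriv (deriv γ₂) τ ^ 2)) * hunit τ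
        + (deriv γ₁ τ * deriv (deriv γ₁) τ + deriv γ₂ τ * deriv (deriv γ₂) τ) * orth τ
    rw [curvature, hsq, Real.sqrt_sq (le_of_lt (hconv τ))]
  -- derivative of the curvature
  have hK' : deriv (curvature γ₁ γ₂) τ₀
      = deriv γ₁ τ₀ * deriv (deriv (deriv γ₂)) τ₀
        - deriv γ₂ τ₀ * deriv (deriv (deriv γ₁)) τ₀ := by
    have hfun : curvature γ₁ γ₂ = fun τ =>
        deriv γ₁ τ * deriv (deriv γ₂) τ - deriv γ₂ τ * deriv (deriv γ₁) τ := funext hW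
    rw [hfun]
    have hd := ((hD _ hγ₁d τ₀).mul (hD _ hγ₂dd τ₀)).sub
      ((hD _ hγ₂d τ₀).mul (hD _ hγ₁dd τ₀))
    exact hd.deriv.trans (by ring)
  have hγ₁ddd : AnalyticOnNhd ℝ (deriv (deriv (deriv γ₁))) Set.univ := hγ₁dd.deriv
  have hγ₂ddd : AnalyticOnNhd ℝ (deriv (deriv (deriv γ₂))) Set.univ := hγ₂dd.deriv
  set c : ℝ := deriv γ₁ τ₀ / deriv γ₂ τ₀ with hcdef
  set X : ℝ → ℝ := fun τ => γ₁ τ₀ + c * (γ₂ τ - γ₂ τ₀) with hXdef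
  set f : ℝ → ℝ := fun τ => (γ₁ τ) ^ 2 - (X τ) ^ 2 with hfdef
  have hg₂'ne : deriv γ₂ τ₀ ≠ 0 := ne_of_lt hγ₂'
  have hX : ∀ τ, HasDerivAt X (c * deriv γ₂ τ) τ := by
    intro τ
    exact (((hD _ hγ₂ τ).sub_const (γ₂ τ₀)).const_mul c).const_add (γ₁ τ₀)
  set f1 : ℝ → ℝ := fun τ =>
      2 * γ₁ τ * deriv γ₁ τ - 2 * X τ * (c * deriv γ₂ τ) with hf1def
  have hf1 : ∀ τ, HasDerivAt f (f1 τ) τ := by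
    intro τ
    have := ((hD _ hγ₁ τ).pow 2).sub ((hX τ).pow 2)
    refine this.congr_deriv ?_; simp only [hf1def]; ring
  set f2 : ℝ → ℝ := fun τ =>
      2 * ((deriv γ₁ τ) ^ 2 + γ₁ τ * deriv (deriv γ₁) τ)
      - 2 * ((c * deriv γ₂ τ) ^ 2 + X τ * (c * deriv (deriv γ₂) τ)) with hf2def
  have hf2 : ∀ τ, HasDerivAt f1 (f2 τ) τ := by
    intro τ
    rw [hf1def]
    have ha := ((hD _ hγ₁ τ).const_mul 2).mul (hD _ hγ₁d τ)
    have hb := ((hX τ).const_mul 2).mul ((hD _ hγ₂d τ).const_mul c)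
    have H := ha.sub hb
    refine H.congr_deriv ?_
    simp only [hf2def]; ring
  set f3 : ℝ → ℝ := fun τ =>
      2 * (3 * deriv γ₁ τ * deriv (deriv γ₁) τ + γ₁ τ * deriv (deriv (deriv γ₁)) τ)
      - 2 * (3 * (c * deriv γ₂ τ) * (c * deriv (deriv γ₂) τ)
          + X τ * (c * deriv (deriv (deriv γ₂)) τ)) with hf3def
  have hf3 : ∀ τ, HasDerivAt f2 (f3 τ) τ := by
    intro τ
    rw [hf2def]
    have ha := (((hD _ hγ₁d τ).pow 2).add ((hD _ hγ₁ τ).mul (hD _ hγ₁dd τ))).const_mul 2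
    have hb := ((((hD _ hγ₂d τ).const_mul c).pow 2).add
      ((hX τ).mul ((hD _ hγ₂dd τ).const_mul c))).const_mul 2
    have H := ha.sub hb
    refine H.congr_deriv ?_
    simp only [hf3def]; ring
  have hcg : c * deriv γ₂ τ₀ = deriv γ₁ τ₀ := div_mul_cancel₀ _ hg₂'ne
  have hXτ₀ : X τ₀ = γ₁ τ₀ := by simp [hXdef]
  have h0 : f τ₀ = 0 := by simp [hfdef, hXτ₀]
  have h1 : deriv f τ₀ = 0 := by
    rw [(hf1 τ₀).deriv]; simp only [hf1def]; rw [hcg, hXτ₀]; ring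
  have hdf : deriv f = f1 := funext fun τ => (hf1 τ).deriv
  have hdf2 : deriv (deriv f) = f2 := by rw [hdf]; exact funext fun τ => (hf2 τ).deriv
  have hdf3 : deriv (deriv (deriv f)) = f3 := by
    rw [hdf2]; exact funext fun τ => (hf3 τ).deriv
  set m : ℝ := -deriv γ₂ τ₀ with hmdef
  have hm : 0 < m := by simp [hmdef]; linarith
  set K : ℝ := curvature γ₁ γ₂ τ₀ with hKdef
  set K' : ℝ := deriv (curvature γ₁ γ₂) τ₀ with hK'def
  have hKval : K = deriv γ₁ τ₀ * deriv (deriv γ₂) τ₀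
      - deriv γ₂ τ₀ * deriv (deriv γ₁) τ₀ := hW τ₀
  have hKpos : 0 < K := by rw [hKval]; exact hconv τ₀
  set A : ℝ := K * γ₁ τ₀ / m with hAdef
  set B : ℝ := (K * deriv γ₁ τ₀ + γ₁ τ₀ * K' / 3) / m with hBdef
  have hA : 0 < A := div_pos (mul_pos hKpos hpos) hm
  have h2 : deriv (deriv f) τ₀ = 2 * A := by
    rw [hdf2]; simp only [hf2def, hAdef]; rw [hXτ₀, hKval, hcdef, hmdef]
    field_simp; ring
  have h3 : deriv (deriv (deriv f)) τ₀ = 6 * B := by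
    rw [hdf3]; simp only [hf3def, hBdef]
    rw [hXτ₀, hKval, hK', hcdef, hmdef]
    field_simp; ring
  -- analyticity of f at τ₀
  have hXa : AnalyticAt ℝ X τ₀ := by
    rw [hXdef]
    exact analyticAt_const.add (analyticAt_const.mul ((hγ₂ τ₀ trivial).sub analyticAt_const))
  have hfa : AnalyticAt ℝ f τ₀ := by
    rw [hfdef]
    exact ((hγ₁ τ₀ trivial).pow 2).sub (hXa.pow 2)
  -- the final constant
  have hKγm : 0 < K * γ₁ τ₀ * m := by positivity
  have hS : 0 < Real.sqrt (K * γ₁ τ₀ * m) := Real.sqrt_pos.mpr hKγm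
  have habs : |deriv γ₂ τ₀| = m := abs_of_neg hγ₂'
  have hsqrtA : Real.sqrt A = Real.sqrt (K * γ₁ τ₀ * m) / m := by
    have hAeq : A = (K * γ₁ τ₀ * m) / m ^ 2 := by
      rw [hAdef]; field_simp
    rw [hAeq, Real.sqrt_div hKγm.le, Real.sqrt_sq hm.le]
  have hconst : -B / Real.sqrt A
      = -(γ₁ τ₀ * K' / 3 + K * deriv γ₁ τ₀)
          / Real.sqrt (K * γ₁ τ₀ * |deriv γ₂ τ₀|) := by
    rw [habs, hsqrtA, hBdef]
    field_simp
    ring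
  obtain ⟨δ, hδ, hP1, hP2, hP3⟩ := sqrt_factor_limit f τ₀ A B hA hfa h0 h1 h2 h3
  rw [hconst] at hP3
  exact ⟨δ, hδ, hP1, hP2, hP3⟩
end

section
/- Let C > 0 and let (a_i)_{i∈ℕ} be a sequence of strictly positive real numbers satisfying |a_{i+1} − a_i| ≤ C·(a_i² + a_{i+1}²) for every i. Then the series Σ_i a_i diverges (i.e., the family (a_i) is not summable). -/
/-- **No accumulation of bounces: divergence of the increments.**
If `C > 0` and `(a i)` is a sequence of strictly positive reals with
`|a (i+1) - a i| ≤ C * (a i ^ 2 + a (i+1) ^ 2)` for every `i`, then the series `Σ a i`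
diverges, i.e. the family `a` is not summable. -/
theorem not_summable_of_successive_quadratic_control
    (C : ℝ) (hC : 0 < C) (a : ℕ → ℝ) (hpos : ∀ i, 0 < a i)
    (hrec : ∀ i, |a (i + 1) - a i| ≤ C * ((a i) ^ 2 + (a (i + 1)) ^ 2)) :
    ¬ Summable a := by
  intro hsum
  -- a tends to 0
  have htend := hsum.tendsto_atTop_zero
  have hsmall : ∀ᶠ i in Filter.atTop, a i < 1 / (4 * C) := by
    have : {x : ℝ | x < 1 / (4 * C)} ∈ nhds (0 : ℝ) := by
      apply gt_mem_nhds
      positivity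
    exact htend.eventually this
  obtain ⟨N, hN⟩ := Filter.eventually_atTop.1 hsmall
  -- key step: for i ≥ N, 1/a(i+1) ≤ 1/a i + 4C
  have key : ∀ i, N ≤ i → 1 / a (i + 1) ≤ 1 / a i + 4 * C := by
    intro i hi
    have hx := hpos i
    have hy := hpos (i + 1)
    have hxs : a i < 1 / (4 * C) := hN i hi
    have hys : a (i + 1) < 1 / (4 * C) := hN (i + 1) (le_trans hi (Nat.le_succ i))
    have hxC : C * a i ≤ 1 / 4 := by
      rw [lt_div_iff₀ (by positivity)] at hxs; nlinarith
    have hyC : C * a (i + 1) ≤ 1 / 4 := by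
      rw [lt_div_iff₀ (by positivity)] at hys; nlinarith
    have habs := hrec i
    have h1 : a i - a (i + 1) ≤ C * ((a i) ^ 2 + (a (i + 1)) ^ 2) := by
      refine le_trans (le_abs_self _) ?_
      rw [abs_sub_comm]; exact habs
    have h2 : a (i + 1) - a i ≤ C * ((a i) ^ 2 + (a (i + 1)) ^ 2) :=
      le_trans (le_abs_self _) habs
    -- ratio bounds
    have hr1 : 3 * a i ≤ 5 * a (i + 1) := by nlinarith
    have hr2 : 3 * a (i + 1) ≤ 5 * a i := by nlinarith
    -- x - y ≤ 4C x y
    have hxy : (a i) ^ 2 + (a (i + 1)) ^ 2 ≤ 4 * (a i * a (i + 1)) := by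
      nlinarith [mul_le_mul_of_nonneg_right hr1 hx.le,
        mul_le_mul_of_nonneg_right hr2 hy.le]
    have h3 : a i - a (i + 1) ≤ 4 * C * (a i * a (i + 1)) := by
      nlinarith [mul_le_mul_of_nonneg_left hxy hC.le]
    have h4 : 1 / a (i + 1) - 1 / a i ≤ 4 * C := by
      rw [div_sub_div _ _ hy.ne' hx.ne', div_le_iff₀ (by positivity)]
      nlinarith
    linarith
  -- induction: 1/a(N+k) ≤ 1/a N + 4C k
  have hind : ∀ k : ℕ, 1 / a (N + k) ≤ 1 / a N + 4 * C * k := by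
    intro k
    induction k with
    | zero => simp
    | succ k ih =>
      have := key (N + k) (Nat.le_add_right N k)
      have hk : (N + (k + 1)) = (N + k) + 1 := by ring
      rw [hk]
      push_cast
      linarith
  set M := 1 / a N + 4 * C with hM
  have hMpos : 0 < M := by have := hpos N; positivity
  -- lower bound a (N+k) ≥ 1/(M*(k+1))
  have hlow : ∀ k : ℕ, 1 / (M * (k + 1)) ≤ a (N + k) := by
    intro k
    have h1 : 1 / a (N + k) ≤ M * (k + 1) := by
      have := hind k
      have hk0 : (0:ℝ) ≤ k := Nat.cast_nonneg k
      have haN := hpos N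
      calc 1 / a (N + k) ≤ 1 / a N + 4 * C * k := this
        _ ≤ M * (k + 1) := by rw [hM]; nlinarith [div_pos one_pos haN]
    have hpk := hpos (N + k)
    have := one_div_le_one_div_of_le (by positivity : (0:ℝ) < 1 / a (N + k)) h1
    rwa [one_div_one_div] at this
  -- comparison: 1/(M*(k+1)) summable → contradiction
  have hshift : Summable (fun k => a (N + k)) := by
    have := (summable_nat_add_iff N).2 hsum
    simpa [add_comm] using this
  have hs1 : Summable (fun k : ℕ => 1 / (M * (k + 1))) :=
    Summable.of_nonneg_of_le (fun k => by positivity) hlow hshift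
  have hs2 : Summable (fun k : ℕ => 1 / ((k : ℝ) + 1)) := by
    have := hs1.mul_left M
    refine this.congr fun k => ?_
    field_simp
  have hs3 : Summable (fun n : ℕ => 1 / (n : ℝ)) := by
    rw [← summable_nat_add_iff 1]
    refine hs2.congr fun k => ?_
    push_cast
    ring_nf
  exact Real.not_summable_one_div_natCast hs3
end

section
/- Let ξ : ℝ³ → ℝ be real-analytic, let Ω := {y ∈ ℝ³ : ξ(y) < 0}, and for (x,v) ∈ ℝ³ × ℝ³ define the backward exit time t_b(x,v) := sup{τ ≥ 0 : x − s v ∈ closure(Ω) for all s ∈ [0,τ]} (with sup ∅ := 0) and the backward exit position x_b(x,v) := x − t_b(x,v)·v. Suppose (x₀,v₀) satisfies: x₀ ∈ Ω, v₀ ≠ 0, 0 < t_b(x₀,v₀) < ∞, x₀ − s v₀ ∈ Ω for all s ∈ [0, t_b(x₀,v₀)) (no grazing before exit), ξ(x_b(x₀,v₀)) = 0, and ∇ξ(x_b(x₀,v₀))·v₀ ≠ 0 (transversal, non-grazing exit). Then there is an open neighborhood of (x₀,v₀) on which the functions t_b, x_b, and the reflected velocity (x,v) ↦ v − 2(n(x_b(x,v))·v)·n(x_b(x,v)),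 where n := ∇ξ/|∇ξ|, are real-analytic. -/
open scoped RealInnerProductSpace
open Set Filter Topology

noncomputable section

/-- The set of backward times `τ ≥ 0` during which the straight backward trajectory from
`(x, v)` stays inside the closure of `Ω = {ξ < 0}`. -/
def backwardSet (ξ : EuclideanSpace ℝ (Fin 3) → ℝ) (x v : EuclideanSpace ℝ (Fin 3)) :
    Set ℝ :=
  {τ : ℝ | 0 ≤ τ ∧ ∀ s ∈ Set.Icc (0 : ℝ) τ, x - s • v ∈ closure {y | ξ y < 0}}

/-- The backward exit time `t_b(x,v) := sup {τ ≥ 0 : x − s v ∈ Ω̄ for all 0 ≤ s ≤ τ}` (with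
the real-supremum convention `sup ∅ = 0`). -/
def exitTime (ξ : EuclideanSpace ℝ (Fin 3) → ℝ) (x v : EuclideanSpace ℝ (Fin 3)) : ℝ :=
  sSup (backwardSet ξ x v)

/-- The backward exit position `x_b(x,v) := x − t_b(x,v) v`. -/
def exitPos (ξ : EuclideanSpace ℝ (Fin 3) → ℝ) (x v : EuclideanSpace ℝ (Fin 3)) :
    EuclideanSpace ℝ (Fin 3) :=
  x - exitTime ξ x v • v

/-- The outward unit normal `n(y) := ∇ξ(y)/|∇ξ(y)|`. -/
def unitNormal (ξ : EuclideanSpace ℝ (Fin 3) → ℝ) (y : EuclideanSpace ℝ (Fin 3)) :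
    EuclideanSpace ℝ (Fin 3) :=
  ‖gradient ξ y‖⁻¹ • gradient ξ y

/-- **Local analyticity of one billiard step away from grazing.**
Let `ξ` be real-analytic, `Ω = {ξ < 0}`. If `(x₀, v₀)` satisfies `x₀ ∈ Ω`, `v₀ ≠ 0`,
`0 < t_b(x₀,v₀) < ∞`, the backward trajectory stays in `Ω` before exiting, the exit point is
on the boundary `{ξ = 0}`, and the exit is transversal (`∇ξ(x_b)·v₀ ≠ 0`), then `t_b`, `x_b`
and the reflected velocity `(x,v) ↦ v − 2(n(x_b(x,v))·v) n(x_b(x,v))` are real-analytic on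
an open neighborhood of `(x₀, v₀)`. -/
local notation "E3" => EuclideanSpace ℝ (Fin 3)

/-- Derivative along the backward ray. -/
lemma hasDerivAt_line (ξ : E3 → ℝ) (hξ : AnalyticOnNhd ℝ ξ Set.univ) (x v : E3) (t : ℝ) :
    HasDerivAt (fun s : ℝ => ξ (x - s • v)) (-(fderiv ℝ ξ (x - t • v) v)) t := by
  have hd : HasFDerivAt ξ (fderiv ℝ ξ (x - t • v)) (x - t • v) :=
    ((hξ _ trivial).differentiableAt).hasFDerivAt
  have hline : HasDerivAt (fun s : ℝ => x - s • v) (-v) t := by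
    simpa using ((hasDerivAt_id t).smul_const v).const_sub x
  have h := hd.comp_hasDerivAt t hline
  rw [map_neg] at h
  exact h

/-- Analytic implicit function for the exit time equation. -/
lemma implicit_time (ξ : E3 → ℝ) (hξ : AnalyticOnNhd ℝ ξ Set.univ)
    (p₀ : E3 × E3) (T : ℝ) (hval : ξ (p₀.1 - T • p₀.2) = 0)
    (hne : fderiv ℝ ξ (p₀.1 - T • p₀.2) p₀.2 ≠ 0) :
    ∃ τ : E3 × E3 → ℝ, τ p₀ = T ∧
      ∀ᶠ p in 𝓝 p₀, AnalyticAt ℝ τ p ∧ ξ (p.1 - τ p • p.2) = 0 := by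
  classical
  set q₀ : (E3 × E3) × ℝ := (p₀, T) with hq₀
  set m : (E3 × E3) × ℝ → E3 := fun q => q.1.1 - q.2 • q.1.2 with hm
  set Φ : (E3 × E3) × ℝ → (E3 × E3) × ℝ := fun q => (q.1, ξ (m q)) with hΦdef
  have hma : ∀ q, AnalyticAt ℝ m q := fun q =>
    (analyticAt_fst.comp analyticAt_fst).sub
      (analyticAt_snd.smul (analyticAt_snd.comp analyticAt_fst))
  have hΦa : AnalyticAt ℝ Φ q₀ := analyticAt_fst.prod ((hξ _ trivial).comp (hma q₀))
  set L : E3 →L[ℝ] ℝ := fderiv ℝ ξ (m q₀) with hL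
  have hmq₀ : m q₀ = p₀.1 - T • p₀.2 := rfl
  set F1 : (E3 × E3) × ℝ →L[ℝ] E3 × E3 := ContinuousLinearMap.fst ℝ (E3 × E3) ℝ with hF1
  set S1 : (E3 × E3) × ℝ →L[ℝ] ℝ := ContinuousLinearMap.snd ℝ (E3 × E3) ℝ with hS1
  set F2 : E3 × E3 →L[ℝ] E3 := ContinuousLinearMap.fst ℝ E3 E3 with hF2
  set S2 : E3 × E3 →L[ℝ] E3 := ContinuousLinearMap.snd ℝ E3 E3 with hS2
  set B : (E3 × E3) × ℝ →L[ℝ] E3 :=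
    F2.comp F1 - (T • (S2.comp F1) + S1.smulRight p₀.2) with hB
  have hmB : HasFDerivAt m B q₀ := by
    have h1 : HasFDerivAt (fun q : (E3 × E3) × ℝ => q.1.1) (F2.comp F1) q₀ :=
      (hasFDerivAt_fst).comp q₀ hasFDerivAt_fst
    have h2 : HasFDerivAt (fun q : (E3 × E3) × ℝ => q.2 • q.1.2)
        ((q₀.2 : ℝ) • (S2.comp F1) + S1.smulRight q₀.1.2) q₀ :=
      by
        have hf1 : HasFDerivAt (fun q : (E3 × E3) × ℝ => q.1) F1 q₀ := hasFDerivAt_fst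
        have hs2 : HasFDerivAt (fun y : E3 × E3 => y.2) S2 q₀.1 := hasFDerivAt_snd
        have hs1 : HasFDerivAt (fun q : (E3 × E3) × ℝ => q.2) S1 q₀ := hasFDerivAt_snd
        have h := hs1.smul (hs2.comp q₀ hf1)
        exact h
    exact h1.sub h2
  have hLd : HasFDerivAt ξ L (m q₀) := ((hξ _ trivial).differentiableAt).hasFDerivAt
  set Φ' : (E3 × E3) × ℝ →L[ℝ] (E3 × E3) × ℝ := F1.prod (L.comp B) with hΦ'def
  have hΦ' : HasFDerivAt Φ Φ' q₀ := HasFDerivAt.prodMk hasFDerivAt_fst (HasFDerivAt.comp q₀ hLd hmB)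
  set c : ℝ := L p₀.2 with hc
  have hcne : c ≠ 0 := hne
  set A : E3 × E3 →L[ℝ] ℝ := L.comp (F2 - T • S2) with hA
  set Ψ' : (E3 × E3) × ℝ →L[ℝ] (E3 × E3) × ℝ :=
    F1.prod (c⁻¹ • (A.comp F1 - S1)) with hΨ'
  have hLB : ∀ q : (E3 × E3) × ℝ, (L.comp B) q = A q.1 - q.2 * c := by
    intro q
    simp only [hB, hA, ContinuousLinearMap.comp_apply, ContinuousLinearMap.sub_apply,
      ContinuousLinearMap.add_apply, ContinuousLinearMap.smul_apply,
      ContinuousLinearMap.smulRight_apply, map_sub, map_add, map_smul, smul_eq_mul,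
      ContinuousLinearMap.coe_fst', ContinuousLinearMap.coe_snd', hF1, hF2, hS1, hS2, hc]
    ring
  have h₁ : ∀ q, Ψ' (Φ' q) = q := by
    intro q
    have := hLB q
    apply Prod.ext
    · rfl
    · simp only [hΨ', hΦ'def, ContinuousLinearMap.prod_apply, ContinuousLinearMap.comp_apply,
        ContinuousLinearMap.smul_apply, ContinuousLinearMap.sub_apply,
        ContinuousLinearMap.coe_fst', ContinuousLinearMap.coe_snd', hF1, hS1, this,
        smul_eq_mul]
      field_simp
      ring
  have h₂ : ∀ z, Φ' (Ψ' z) = z := by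
    intro z
    apply Prod.ext
    · rfl
    · have := hLB (Ψ' z)
      have h1 : (Ψ' z).1 = z.1 := rfl
      have h2 : (Ψ' z).2 = c⁻¹ * (A z.1 - z.2) := rfl
      simp only [hΦ'def, ContinuousLinearMap.prod_apply, ContinuousLinearMap.coe_fst']
      rw [this, h1, h2]
      field_simp
      ring
  set i : ((E3 × E3) × ℝ) ≃L[ℝ] ((E3 × E3) × ℝ) :=
    ContinuousLinearEquiv.equivOfInverse Φ' Ψ' h₁ h₂ with hi
  have hicoe : (i : ((E3 × E3) × ℝ) →L[ℝ] ((E3 × E3) × ℝ)) = Φ' := rfl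
  have hstrict : HasStrictFDerivAt Φ (i : ((E3 × E3) × ℝ) →L[ℝ] ((E3 × E3) × ℝ)) q₀ := by
    have h := hΦa.hasStrictFDerivAt
    rwa [hΦ'.fderiv, ← hicoe] at h
  set F := HasStrictFDerivAt.toOpenPartialHomeomorph Φ hstrict with hF
  have hcoe : ⇑F = Φ := HasStrictFDerivAt.toOpenPartialHomeomorph_coe hstrict
  have hsrc : q₀ ∈ F.source := HasStrictFDerivAt.mem_toOpenPartialHomeomorph_source hstrict
  have htgt : Φ q₀ ∈ F.target := HasStrictFDerivAt.image_mem_toOpenPartialHomeomorph_target hstrict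
  have hΦq₀ : Φ q₀ = (p₀, 0) := by
    simp only [hΦdef, hmq₀, hval]
    rfl
  have hsymm : AnalyticAt ℝ F.symm (p₀, 0) := by
    rw [← hΦq₀]
    refine F.analyticAt_symm' (i := i) hsrc ?_ ?_
    · rw [hcoe]; exact hΦa
    · rw [hcoe, hΦ'.fderiv, hicoe]
  set τ : E3 × E3 → ℝ := fun p => (F.symm (p, 0)).2 with hτ
  have hτp₀ : τ p₀ = T := by
    have h := F.left_inv hsrc
    rw [hcoe, hΦq₀] at h
    simp only [hτ, h]
    rfl
  have hσ : AnalyticAt ℝ (fun p : E3 × E3 => ((p, (0:ℝ)) : (E3 × E3) × ℝ)) p₀ :=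
    analyticAt_id.prod analyticAt_const
  have hτa : AnalyticAt ℝ τ p₀ := by
    have h1 : AnalyticAt ℝ (fun p : E3 × E3 => F.symm (p, 0)) p₀ := AnalyticAt.comp (f := fun p : E3 × E3 => ((p, (0:ℝ)) : (E3 × E3) × ℝ)) hsymm hσ
    exact analyticAt_snd.comp h1
  have hmemtgt : ∀ᶠ p in 𝓝 p₀, ((p, (0:ℝ)) : (E3 × E3) × ℝ) ∈ F.target := by
    have h0 : (p₀, (0:ℝ)) ∈ F.target := hΦq₀ ▸ htgt
    have : Continuous fun p : E3 × E3 => ((p, (0:ℝ)) : (E3 × E3) × ℝ) :=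
      continuous_id.prodMk continuous_const
    exact this.continuousAt.preimage_mem_nhds (F.open_target.mem_nhds h0)
  have hroot : ∀ p, ((p, (0:ℝ)) : (E3 × E3) × ℝ) ∈ F.target → ξ (p.1 - τ p • p.2) = 0 := by
    intro p hp
    have key : Φ (F.symm (p, 0)) = (p, 0) := by rw [← hcoe]; exact F.right_inv hp
    have h1 : (F.symm ((p, (0:ℝ)))).1 = p := congrArg Prod.fst key
    have h2 : ξ (m (F.symm (p, 0))) = 0 := congrArg Prod.snd key
    have : m (F.symm (p, 0)) = p.1 - τ p • p.2 := by
      simp only [hm, hτ, h1]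
    rwa [this] at h2
  refine ⟨τ, hτp₀, ?_⟩
  filter_upwards [hτa.eventually_analyticAt, hmemtgt] with p h1 h2
  exact ⟨h1, hroot p h2⟩

/-- **Local analyticity of one billiard step away from grazing.** -/
theorem billiard_step_analytic
    (ξ : EuclideanSpace ℝ (Fin 3) → ℝ) (hξ : AnalyticOnNhd ℝ ξ Set.univ)
    (x₀ v₀ : EuclideanSpace ℝ (Fin 3))
    (hx₀ : ξ x₀ < 0) (hv₀ : v₀ ≠ 0)
    (hfin : BddAbove (backwardSet ξ x₀ v₀))
    (htb : 0 < exitTime ξ x₀ v₀)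
    (hin : ∀ s ∈ Set.Ico (0 : ℝ) (exitTime ξ x₀ v₀), ξ (x₀ - s • v₀) < 0)
    (hbd : ξ (exitPos ξ x₀ v₀) = 0)
    (htrans : ⟪gradient ξ (exitPos ξ x₀ v₀), v₀⟫ ≠ 0) :
    ∃ V : Set (EuclideanSpace ℝ (Fin 3) × EuclideanSpace ℝ (Fin 3)),
      IsOpen V ∧ (x₀, v₀) ∈ V ∧
      AnalyticOnNhd ℝ (fun p => exitTime ξ p.1 p.2) V ∧
      AnalyticOnNhd ℝ (fun p => exitPos ξ p.1 p.2) V ∧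
      AnalyticOnNhd ℝ
        (fun p => p.2 - (2 * ⟪unitNormal ξ (exitPos ξ p.1 p.2), p.2⟫) •
          unitNormal ξ (exitPos ξ p.1 p.2)) V := by
  classical
  set T := exitTime ξ x₀ v₀ with hTdef
  set p₀ : E3 × E3 := (x₀, v₀) with hp₀def
  have hbpos : exitPos ξ x₀ v₀ = x₀ - T • v₀ := rfl
  have hval : ξ (p₀.1 - T • p₀.2) = 0 := hbd
  have hgrad_inner : ∀ (y w : E3), ⟪gradient ξ y, w⟫ = fderiv ℝ ξ y w := fun y w =>
    InnerProductSpace.toDual_symm_apply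
  have hcne : fderiv ℝ ξ (p₀.1 - T • p₀.2) p₀.2 ≠ 0 := by
    rw [← hgrad_inner]; exact htrans
  -- basic continuity facts
  have hξcont : Continuous ξ := continuous_iff_continuousAt.2 fun x => (hξ x trivial).continuousAt
  have hfderiv_an : AnalyticOnNhd ℝ (fderiv ℝ ξ) Set.univ := hξ.fderiv_of_isOpen isOpen_univ
  have hfderiv_cont : Continuous (fderiv ℝ ξ) :=
    continuous_iff_continuousAt.2 fun x => (hfderiv_an x trivial).continuousAt
  have hgrad_cont : Continuous (gradient ξ) := by
    have : Continuous fun y =>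
        (InnerProductSpace.toDual ℝ E3).symm (fderiv ℝ ξ y) :=
      (InnerProductSpace.toDual ℝ E3).symm.continuous.comp hfderiv_cont
    exact this
  have hgrad_an : ∀ y : E3, AnalyticAt ℝ (gradient ξ) y := by
    intro y
    let e : StrongDual ℝ E3 →L[ℝ] E3 :=
      { toFun := fun ℓ => (InnerProductSpace.toDual ℝ E3).symm ℓ
        map_add' := fun a b => map_add _ a b
        map_smul' := fun c a => by
          have := (InnerProductSpace.toDual ℝ E3).symm.map_smulₛₗ c a
          simpa [starRingEnd_apply, star_trivial] using this
        cont := (InnerProductSpace.toDual ℝ E3).symm.continuous }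
    have h1 : AnalyticAt ℝ (fun z => e (fderiv ℝ ξ z)) y :=
      (e.analyticAt _).comp (hfderiv_an y trivial)
    exact h1.congr (Filter.Eventually.of_forall fun z => rfl)
  -- c < 0
  have hcneg : fderiv ℝ ξ (x₀ - T • v₀) v₀ < 0 := by
    rcases lt_or_gt_of_ne hcne with h | h
    · exact h
    · exfalso
      have hder := hasDerivAt_line ξ hξ x₀ v₀ T
      have hslope := hasDerivAt_iff_tendsto_slope.1 hder
      have hmono : Tendsto (slope (fun s => ξ (x₀ - s • v₀)) T) (𝓝[<] T)
          (𝓝 (-(fderiv ℝ ξ (x₀ - T • v₀) v₀))) :=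
        hslope.mono_left (nhdsWithin_mono _ fun s hs => ne_of_lt hs)
      have hev : ∀ᶠ s in 𝓝[<] T, 0 ≤ slope (fun s => ξ (x₀ - s • v₀)) T s := by
        filter_upwards [Ioo_mem_nhdsLT_of_mem
          (show T ∈ Set.Ioc (0:ℝ) T from ⟨htb, le_refl T⟩)] with s hs
        have hneg : ξ (x₀ - s • v₀) < 0 := hin s ⟨le_of_lt hs.1, hs.2⟩
        have hslope_eq : slope (fun s => ξ (x₀ - s • v₀)) T s
            = (ξ (x₀ - s • v₀) - ξ (x₀ - T • v₀)) / (s - T) := slope_def_field _ _ _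
        rw [hslope_eq, hval]
        apply div_nonneg_iff.2
        right
        constructor
        · linarith
        · linarith [hs.2]
      have h0 : 0 ≤ -(fderiv ℝ ξ (x₀ - T • v₀) v₀) := ge_of_tendsto hmono hev
      have : fderiv ℝ ξ (x₀ - T • v₀) v₀ ≤ 0 := by linarith
      exact absurd h this.not_gt
  -- implicit function
  obtain ⟨τ, hτp₀, hev⟩ := implicit_time ξ hξ p₀ T hval hcne
  obtain ⟨U₃, hU₃sub, hU₃open, hU₃mem⟩ := eventually_nhds_iff.1 hev
  have hτcont : ∀ p ∈ U₃, ContinuousAt τ p := fun p hp => ((hU₃sub p hp).1).continuousAt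
  -- the open set O for the derivative sign
  set D : (E3 × E3) × ℝ → ℝ := fun q => fderiv ℝ ξ (q.1.1 - q.2 • q.1.2) q.1.2 with hD
  have hDcont : Continuous D := by
    apply Continuous.clm_apply
    · exact hfderiv_cont.comp ((continuous_fst.fst).sub (continuous_snd.smul continuous_fst.snd))
    · exact continuous_fst.snd
  have hOopen : IsOpen {q : (E3 × E3) × ℝ | D q < 0} := isOpen_lt hDcont continuous_const
  have hq₀O : ((p₀, T) : (E3 × E3) × ℝ) ∈ {q : (E3 × E3) × ℝ | D q < 0} := hcneg
  obtain ⟨ε, hεpos, hball⟩ := Metric.isOpen_iff.1 hOopen _ hq₀O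
  set δ : ℝ := min (ε / 2) (T / 2) with hδdef
  have hδpos : 0 < δ := lt_min (by linarith) (by linarith)
  have hδε : δ ≤ ε / 2 := min_le_left _ _
  have hδT : δ ≤ T / 2 := min_le_right _ _
  -- tube lemma for the initial segment
  have hNopen : IsOpen {q : (E3 × E3) × ℝ | ξ (q.1.1 - q.2 • q.1.2) < 0} :=
    isOpen_lt (hξcont.comp ((continuous_fst.fst).sub (continuous_snd.smul continuous_fst.snd)))
      continuous_const
  have hsub : ({p₀} : Set (E3 × E3)) ×ˢ Set.Icc (0:ℝ) (T - δ) ⊆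
      {q : (E3 × E3) × ℝ | ξ (q.1.1 - q.2 • q.1.2) < 0} := by
    rintro ⟨p, s⟩ ⟨hp, hs⟩
    simp only [mem_singleton_iff] at hp
    subst hp
    exact hin s ⟨hs.1, by linarith [hs.2]⟩
  obtain ⟨u, w, huopen, hwopen, hu, hw, huw⟩ :=
    generalized_tube_lemma isCompact_singleton isCompact_Icc hNopen hsub
  have hp₀u : p₀ ∈ u := hu rfl
  -- V₄ : implicit conditions
  set V₄ : Set (E3 × E3) := {p | p ∈ U₃ ∧ τ p ∈ Set.Ioo (T - δ) (T + δ) ∧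
    gradient ξ (p.1 - τ p • p.2) ≠ 0} with hV₄def
  have hV₄open : IsOpen V₄ := by
    rw [isOpen_iff_mem_nhds]
    rintro p ⟨hp1, hp2, hp3⟩
    have hct : ContinuousAt τ p := hτcont p hp1
    have hcG : ContinuousAt (fun q : E3 × E3 => gradient ξ (q.1 - τ q • q.2)) p :=
      hgrad_cont.continuousAt.comp (continuousAt_fst.sub (hct.smul continuousAt_snd))
    have h1 : U₃ ∈ 𝓝 p := hU₃open.mem_nhds hp1
    have h2 : τ ⁻¹' Set.Ioo (T - δ) (T + δ) ∈ 𝓝 p :=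
      hct.preimage_mem_nhds (isOpen_Ioo.mem_nhds hp2)
    have h3 : (fun q : E3 × E3 => gradient ξ (q.1 - τ q • q.2)) ⁻¹' {0}ᶜ ∈ 𝓝 p :=
      hcG.preimage_mem_nhds (isOpen_compl_singleton.mem_nhds hp3)
    filter_upwards [h1, h2, h3] with q hq1 hq2 hq3
    exact ⟨hq1, hq2, hq3⟩
  have hp₀V₄ : p₀ ∈ V₄ := by
    refine ⟨hU₃mem, ?_, ?_⟩
    · rw [hτp₀]; exact ⟨by linarith, by linarith⟩
    · rw [hτp₀]
      intro h0
      apply htrans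
      have : gradient ξ (exitPos ξ x₀ v₀) = 0 := h0
      rw [this, inner_zero_left]
  set V : Set (E3 × E3) := u ∩ Metric.ball p₀ (ε / 2) ∩ V₄ with hVdef
  have hVopen : IsOpen V := (huopen.inter Metric.isOpen_ball).inter hV₄open
  have hp₀V : p₀ ∈ V := ⟨⟨hp₀u, Metric.mem_ball_self (by linarith)⟩, hp₀V₄⟩
  -- the main identification
  have hmain : ∀ p ∈ V, exitTime ξ p.1 p.2 = τ p := by
    rintro p ⟨⟨hpu, hpball⟩, hpU₃, hτIoo, hGne⟩
    set t' := τ p with ht'def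
    have hroot : ξ (p.1 - t' • p.2) = 0 := (hU₃sub p hpU₃).2
    have hmono : StrictMonoOn (fun t => ξ (p.1 - t • p.2)) (Set.Icc (T - δ) (T + δ)) := by
      apply strictMonoOn_of_deriv_pos (convex_Icc _ _)
      · exact (hξcont.comp
          (continuous_const.sub (continuous_id.smul continuous_const))).continuousOn
      · intro t ht
        rw [interior_Icc] at ht
        have hDer := hasDerivAt_line ξ hξ p.1 p.2 t
        rw [hDer.deriv]
        have hdist : dist ((p, t) : (E3 × E3) × ℝ) ((p₀, T) : (E3 × E3) × ℝ) < ε := by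
          rw [Prod.dist_eq]
          apply max_lt
          · exact lt_of_lt_of_le hpball (by linarith)
          · rw [Real.dist_eq]
            have : |t - T| < δ := abs_lt.2 ⟨by linarith [ht.1], by linarith [ht.2]⟩
            linarith
        have hneg : fderiv ℝ ξ (p.1 - t • p.2) p.2 < 0 := hball hdist
        linarith
    have hbefore : ∀ s ∈ Set.Icc (0:ℝ) (T - δ), ξ (p.1 - s • p.2) < 0 := by
      intro s hs
      have h : ((p, s) : (E3 × E3) × ℝ) ∈
          {q : (E3 × E3) × ℝ | ξ (q.1.1 - q.2 • q.1.2) < 0} := huw ⟨hpu, hw hs⟩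
      exact h
    have hneg : ∀ s ∈ Set.Ico (0:ℝ) t', ξ (p.1 - s • p.2) < 0 := by
      intro s hs
      by_cases hsle : s ≤ T - δ
      · exact hbefore s ⟨hs.1, hsle⟩
      · push_neg at hsle
        have h1 : s ∈ Set.Icc (T - δ) (T + δ) :=
          ⟨le_of_lt hsle, by linarith [hs.2, hτIoo.2]⟩
        have h2 : t' ∈ Set.Icc (T - δ) (T + δ) := ⟨le_of_lt hτIoo.1, le_of_lt hτIoo.2⟩
        have h3 : ξ (p.1 - s • p.2) < ξ (p.1 - t' • p.2) := hmono h1 h2 hs.2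
        rwa [hroot] at h3
    have ht'pos : 0 < t' := by
      have : (0:ℝ) < T - δ := by linarith
      linarith [hτIoo.1]
    have hmem : t' ∈ backwardSet ξ p.1 p.2 := by
      refine ⟨le_of_lt ht'pos, fun s hs => ?_⟩
      rcases lt_or_eq_of_le hs.2 with h | h
      · exact subset_closure (hneg s ⟨hs.1, h⟩)
      · have hspos : 0 < s := h ▸ ht'pos
        have htd : Tendsto (fun r : ℝ => p.1 - r • p.2) (𝓝[<] s) (𝓝 (p.1 - s • p.2)) :=
          ((continuous_const.sub (continuous_id.smul continuous_const)).tendsto s).mono_left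
            nhdsWithin_le_nhds
        apply mem_closure_of_tendsto htd
        filter_upwards [Ioo_mem_nhdsLT_of_mem
          (show s ∈ Set.Ioc (0:ℝ) s from ⟨hspos, le_refl s⟩)] with r hr
        exact hneg r ⟨le_of_lt hr.1, lt_of_lt_of_le hr.2 (le_of_eq h)⟩
    have hub : ∀ r ∈ backwardSet ξ p.1 p.2, r ≤ t' := by
      intro r hr
      by_contra hlt
      push_neg at hlt
      set s := min r (T + δ) with hsdef
      have hst : t' < s := lt_min hlt hτIoo.2
      have hs_mem : s ∈ Set.Icc (0:ℝ) r := ⟨le_min hr.1 (by linarith), min_le_left _ _⟩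
      have hcl := hr.2 s hs_mem
      have hle0 : ξ (p.1 - s • p.2) ≤ 0 := by
        have hclosed : IsClosed {y : E3 | ξ y ≤ 0} := isClosed_le hξcont continuous_const
        have hsubc : closure {y : E3 | ξ y < 0} ⊆ {y : E3 | ξ y ≤ 0} :=
          closure_minimal (fun y (hy : ξ y < 0) => le_of_lt hy) hclosed
        exact hsubc hcl
      have hpos : 0 < ξ (p.1 - s • p.2) := by
        have h1 : s ∈ Set.Icc (T - δ) (T + δ) :=
          ⟨by linarith [hτIoo.1, hst], min_le_right _ _⟩
        have h2 : t' ∈ Set.Icc (T - δ) (T + δ) := ⟨le_of_lt hτIoo.1, le_of_lt hτIoo.2⟩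
        have h3 : ξ (p.1 - t' • p.2) < ξ (p.1 - s • p.2) := hmono h2 h1 hst
        rwa [hroot] at h3
      linarith
    exact le_antisymm (csSup_le ⟨t', hmem⟩ hub) (le_csSup ⟨t', hub⟩ hmem)
  -- conclusion
  have hVsub : ∀ p ∈ V, p ∈ U₃ ∧ τ p ∈ Set.Ioo (T - δ) (T + δ) ∧
      gradient ξ (p.1 - τ p • p.2) ≠ 0 := by
    rintro p ⟨⟨_, _⟩, hp⟩; exact hp
  have hτ_at : ∀ p ∈ V, AnalyticAt ℝ τ p := fun p hp => (hU₃sub p (hVsub p hp).1).1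
  refine ⟨V, hVopen, hp₀V, ?_, ?_, ?_⟩
  · intro p hp
    refine (hτ_at p hp).congr ?_
    filter_upwards [hVopen.mem_nhds hp] with q hq
    exact (hmain q hq).symm
  · intro p hp
    have h1 : AnalyticAt ℝ (fun q : E3 × E3 => q.1 - τ q • q.2) p :=
      analyticAt_fst.sub ((hτ_at p hp).smul analyticAt_snd)
    refine h1.congr ?_
    filter_upwards [hVopen.mem_nhds hp] with q hq
    show q.1 - τ q • q.2 = exitPos ξ q.1 q.2
    rw [exitPos, hmain q hq]
  · intro p hp
    set Gr : E3 × E3 → E3 := fun q => gradient ξ (q.1 - τ q • q.2) with hGr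
    have hGr_at : AnalyticAt ℝ Gr p := by
      exact (hgrad_an _).comp (analyticAt_fst.sub ((hτ_at p hp).smul analyticAt_snd))
    have hinner : ∀ (f g : E3 × E3 → E3), AnalyticAt ℝ f p → AnalyticAt ℝ g p →
        AnalyticAt ℝ (fun q => (⟪f q, g q⟫ : ℝ)) p := by
      intro f g hf hg
      have h1 : AnalyticAt ℝ (fun x : E3 × E3 => (⟪x.1, x.2⟫ : ℝ)) (f p, g p) := by
        have := (innerSL ℝ (E := E3)).analyticAt_bilinear (f p, g p)
        exact this
      exact AnalyticAt.comp (f := fun q : E3 × E3 => (f q, g q)) h1 (hf.prod hg)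
    have hι : AnalyticAt ℝ (fun q : E3 × E3 => (⟪Gr q, q.2⟫ : ℝ)) p :=
      hinner _ _ hGr_at analyticAt_snd
    have hκ : AnalyticAt ℝ (fun q : E3 × E3 => (⟪Gr q, Gr q⟫ : ℝ)) p :=
      hinner _ _ hGr_at hGr_at
    have hκne : (⟪Gr p, Gr p⟫ : ℝ) ≠ 0 := inner_self_ne_zero.2 (hVsub p hp).2.2
    have hR : AnalyticAt ℝ (fun q : E3 × E3 =>
        q.2 - ((2 * ⟪Gr q, q.2⟫) * (⟪Gr q, Gr q⟫)⁻¹) • Gr q) p :=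
      analyticAt_snd.sub (((analyticAt_const.mul hι).mul (hκ.inv hκne)).smul hGr_at)
    refine hR.congr ?_
    filter_upwards [hVopen.mem_nhds hp] with q hq
    have hGq : Gr q ≠ 0 := (hVsub q hq).2.2
    have hpos : exitPos ξ q.1 q.2 = q.1 - τ q • q.2 := by
      rw [exitPos, hmain q hq]
    show q.2 - ((2 * ⟪Gr q, q.2⟫) * (⟪Gr q, Gr q⟫)⁻¹) • Gr q
        = q.2 - (2 * ⟪unitNormal ξ (exitPos ξ q.1 q.2), q.2⟫) •
            unitNormal ξ (exitPos ξ q.1 q.2)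
    rw [hpos, unitNormal]
    have : gradient ξ (q.1 - τ q • q.2) = Gr q := rfl
    rw [this]
    rw [real_inner_smul_left, smul_smul]
    congr 1
    rw [real_inner_self_eq_norm_mul_norm, mul_inv]
    ring


end
end
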